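/- arXiv:1310.7166 — 4 statements merged into one kernel-verified Lean document; each statement's English description precedes it below -/
import Mathlib

section
/- Let f : ℝ → ℂ be a Schwartz function, let a ∈ ℝ, and set g(x) = exp( i·a·∫_{−∞}^x |f(y)|² dy )·f(x). Then ∫_ℝ |f′|² dx + (3/2)·Im ∫_ℝ |f|²·f·conj(f′) dx + (1/2)∫_ℝ |f|⁶ dx = ∫_ℝ |g′|² dx + (2a + 3/2)·Im ∫_ℝ |g|²·g·conj(g′) dx + (a² + (3/2)a + 1/2)·∫_ℝ |g|⁶ dx. -/
open MeasureTheory ComplexConjugate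

namespace GaugeEnergyAux

open Complex

/-- Integrability criterion: continuous and dominated by a constant times a Schwartz map. -/
lemma aux_int {E : Type*} [NormedAddCommGroup E] (u : SchwartzMap ℝ ℂ) {h : ℝ → E}
    (hc : Continuous h) (C : ℝ) (hb : ∀ x, ‖h x‖ ≤ C * ‖u x‖) :
    Integrable h :=
  ((u.integrable (μ := volume)).norm.const_mul C).mono' hc.aestronglyMeasurable
    (Filter.Eventually.of_forall hb)

lemma alg1 (c d : ℂ) (a : ℝ) :
    ‖d + I * (a:ℂ) * ((‖c‖ ^ 2 : ℝ):ℂ) * c‖ ^ 2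
      = ‖d‖ ^ 2 + a ^ 2 * ‖c‖ ^ 6
        - 2 * a * (((‖c‖ : ℝ):ℂ) ^ 2 * c * conj d).im := by
  have hX2 : ∀ z : ℂ, ‖z‖ ^ 2 = z.re ^ 2 + z.im ^ 2 := by
    intro z; rw [Complex.sq_norm, Complex.normSq_apply]; ring
  have hc6 : ‖c‖ ^ 6 = (c.re ^ 2 + c.im ^ 2) ^ 3 := by
    rw [show ‖c‖ ^ 6 = (‖c‖ ^ 2) ^ 3 by ring, hX2]
  simp only [hX2, hc6, ← Complex.ofReal_pow, Complex.add_re, Complex.add_im, Complex.mul_re,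
    Complex.mul_im, Complex.I_re, Complex.I_im, Complex.ofReal_re, Complex.ofReal_im,
    Complex.conj_re, Complex.conj_im]
  ring

lemma alg2 (c d : ℂ) (a : ℝ) :
    ((‖c‖ : ℝ):ℂ) ^ 2 * c * conj (d + I * (a:ℂ) * ((‖c‖ ^ 2 : ℝ):ℂ) * c)
      = ((‖c‖ : ℝ):ℂ) ^ 2 * c * conj d
        - I * ((a:ℂ) * ((‖c‖ ^ 6 : ℝ):ℂ)) := by
  have hX2 : ∀ z : ℂ, ‖z‖ ^ 2 = z.re ^ 2 + z.im ^ 2 := by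
    intro z; rw [Complex.sq_norm, Complex.normSq_apply]; ring
  have hc6 : ‖c‖ ^ 6 = (c.re ^ 2 + c.im ^ 2) ^ 3 := by
    rw [show ‖c‖ ^ 6 = (‖c‖ ^ 2) ^ 3 by ring, hX2]
  apply Complex.ext <;>
  · simp only [hX2, hc6, ← Complex.ofReal_pow, Complex.add_re, Complex.add_im, Complex.sub_re,
      Complex.sub_im, Complex.mul_re, Complex.mul_im, Complex.I_re, Complex.I_im,
      Complex.ofReal_re, Complex.ofReal_im, Complex.conj_re, Complex.conj_im]
    ring

end GaugeEnergyAux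

noncomputable section

open GaugeEnergyAux in
/-- The DNLS energy expressed through the gauge transform
`g = 𝒢ₐ f`: for any Schwartz `f` and `a ∈ ℝ`,
`E_D(f) = ∫|g′|² + (2a + 3/2) Im ∫ |g|² g conj(g′) + (a² + (3/2)a + 1/2) ∫ |g|⁶`. -/
theorem gauge_energy_identity (f : SchwartzMap ℝ ℂ) (a : ℝ) (g : ℝ → ℂ)
    (hg : ∀ x : ℝ, g x
      = Complex.exp (Complex.I * (a : ℂ) *
          ((∫ y in Set.Iic x, ‖f y‖ ^ 2 : ℝ) : ℂ)) * f x) :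
    (∫ x : ℝ, ‖deriv (fun y : ℝ => f y) x‖ ^ 2)
      + (3/2) * (∫ x : ℝ, (‖f x‖ : ℂ) ^ 2 * f x
          * conj (deriv (fun y : ℝ => f y) x)).im
      + (1/2) * (∫ x : ℝ, ‖f x‖ ^ 6)
    = (∫ x : ℝ, ‖deriv g x‖ ^ 2)
      + (2 * a + 3/2) * (∫ x : ℝ, (‖g x‖ : ℂ) ^ 2 * g x * conj (deriv g x)).im
      + (a ^ 2 + (3/2) * a + 1/2) * (∫ x : ℝ, ‖g x‖ ^ 6) := by
  set d : ℝ → ℂ := deriv (fun y : ℝ => f y) with hd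
  set v : ℝ → ℂ := fun x => (‖f x‖ : ℂ) ^ 2 * f x * conj (d x) with hv
  set E : ℝ → ℂ := fun x => Complex.exp (Complex.I * (a : ℂ) *
      ((∫ y in Set.Iic x, ‖f y‖ ^ 2 : ℝ) : ℂ)) with hE
  have hgE : ∀ x : ℝ, g x = E x * f x := fun x => hg x
  -- bounds for f and its derivative
  obtain ⟨C, hC⟩ := f.decay' 0 0
  have hC' : ∀ x, ‖f x‖ ≤ C := by
    intro x; have := hC x
    rw [pow_zero, one_mul, norm_iteratedFDeriv_zero] at this; exact this
  obtain ⟨C', hCd⟩ := (SchwartzMap.derivCLM ℝ ℂ f).decay' 0 0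
  have hdeq : (⇑(SchwartzMap.derivCLM ℝ ℂ f) : ℝ → ℂ) = d := by
    funext x; rw [hd]; exact SchwartzMap.derivCLM_apply ℝ f x
  have hCd' : ∀ x, ‖d x‖ ≤ C' := by
    intro x
    have h := hCd x
    rw [norm_iteratedFDeriv_zero] at h
    rw [← congrFun hdeq x]
    simp only [pow_zero, one_mul] at h; exact h
  have hdc : Continuous d := hdeq ▸ (SchwartzMap.derivCLM ℝ ℂ f).continuous
  -- integrability
  have hρint : Integrable (fun y => ‖f y‖ ^ 2) := by
    refine aux_int f ?_ C fun x => ?_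
    · exact (continuous_norm.comp f.continuous).pow 2
    rw [Real.norm_eq_abs, _root_.abs_of_nonneg (by positivity)]
    nlinarith [hC' x, norm_nonneg (f x)]
  have hI6 : Integrable (fun x => ‖f x‖ ^ 6) := by
    refine aux_int f ?_ (C ^ 5) fun x => ?_
    · exact (continuous_norm.comp f.continuous).pow 6
    rw [Real.norm_eq_abs, _root_.abs_of_nonneg (by positivity)]
    have h5 : ‖f x‖ ^ 5 ≤ C ^ 5 :=
      pow_le_pow_left₀ (norm_nonneg _) (hC' x) 5
    nlinarith [norm_nonneg (f x),
      mul_le_mul_of_nonneg_right h5 (norm_nonneg (f x))]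
  have hI1 : Integrable (fun x => ‖d x‖ ^ 2) := by
    refine aux_int (SchwartzMap.derivCLM ℝ ℂ f) ?_ C' fun x => ?_
    · exact (continuous_norm.comp hdc).pow 2
    rw [congrFun hdeq x, Real.norm_eq_abs, _root_.abs_of_nonneg (by positivity)]
    nlinarith [hCd' x, norm_nonneg (d x)]
  have hIv : Integrable v := by
    refine aux_int (SchwartzMap.derivCLM ℝ ℂ f) ?_ (C ^ 3) fun x => ?_
    · rw [hv]
      exact (((Complex.continuous_ofReal.comp (continuous_norm.comp f.continuous)).pow
        2).mul f.continuous).mul (Complex.continuous_conj.comp hdc)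
    rw [congrFun hdeq x]
    simp only [hv, norm_mul, norm_pow, Complex.norm_real, Complex.norm_conj,
      norm_norm]
    nlinarith [hC' x, norm_nonneg (f x), norm_nonneg (d x),
      mul_le_mul_of_nonneg_right
        (pow_le_pow_left₀ (norm_nonneg (f x)) (hC' x) 3)
        (norm_nonneg (d x))]
  -- the derivative of g
  have hgd : ∀ x : ℝ, HasDerivAt g
      (E x * (d x + Complex.I * (a : ℂ) * ((‖f x‖ ^ 2 : ℝ) : ℂ) * f x)) x := by
    have hρcont : Continuous (fun y => ‖f y‖ ^ 2) :=
      (continuous_norm.comp f.continuous).pow 2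
    have hΦ : ∀ x : ℝ, HasDerivAt (fun x => ∫ y in Set.Iic x, ‖f y‖ ^ 2)
        (‖f x‖ ^ 2) x := by
      intro x
      have h1 : HasDerivAt (fun u => ∫ y in (0:ℝ)..u, ‖f y‖ ^ 2)
          (‖f x‖ ^ 2) x :=
        intervalIntegral.integral_hasDerivAt_right hρint.intervalIntegrable
          (hρcont.stronglyMeasurableAtFilter _ _) hρcont.continuousAt
      have h2 := h1.const_add (∫ y in Set.Iic (0:ℝ), ‖f y‖ ^ 2)
      apply h2.congr_of_eventuallyEq
      filter_upwards with u
      rw [← intervalIntegral.integral_Iic_sub_Iic hρint.integrableOn hρint.integrableOn]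
      ring
    intro x
    have h3 : HasDerivAt (fun u : ℝ => (((∫ y in Set.Iic u, ‖f y‖ ^ 2 : ℝ)) : ℂ))
        ((‖f x‖ ^ 2 : ℝ) : ℂ) x := (hΦ x).ofReal_comp
    have h4 : HasDerivAt
        (fun u : ℝ => Complex.I * (a:ℂ) * (((∫ y in Set.Iic u, ‖f y‖ ^ 2 : ℝ)) : ℂ))
        (Complex.I * (a:ℂ) * ((‖f x‖ ^ 2 : ℝ) : ℂ)) x := by
      simpa [mul_assoc] using h3.const_mul (Complex.I * (a:ℂ))
    have h5 : HasDerivAt (fun y : ℝ => f y) (d x) x :=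
      f.differentiable.differentiableAt.hasDerivAt
    have h6 := h4.cexp.mul h5
    have h7 := h6.congr_of_eventuallyEq
      (Filter.Eventually.of_forall (fun u => hg u) : g =ᶠ[nhds x] _)
    refine h7.congr_deriv ?_
    simp only [hE]
    ring
  have hderiv : ∀ x : ℝ, deriv g x
      = E x * (d x + Complex.I * (a : ℂ) * ((‖f x‖ ^ 2 : ℝ) : ℂ) * f x) :=
    fun x => (hgd x).deriv
  have hEabs : ∀ x : ℝ, ‖E x‖ = 1 := by
    intro x
    simp only [hE]
    simp [Complex.norm_exp, Complex.mul_re, Complex.mul_im]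
  -- pointwise identities
  have ptG3 : ∀ x, ‖g x‖ = ‖f x‖ := by
    intro x; rw [hgE x, norm_mul, hEabs x, one_mul]
  have ptG1 : ∀ x, ‖deriv g x‖ ^ 2
      = ‖d x‖ ^ 2 + a ^ 2 * ‖f x‖ ^ 6 - 2 * a * (v x).im := by
    intro x
    rw [hderiv x, norm_mul, hEabs x, one_mul]
    simp only [hv]
    exact alg1 (f x) (d x) a
  have ptG2 : ∀ x, (‖g x‖ : ℂ) ^ 2 * g x * conj (deriv g x)
      = v x - Complex.I * ((a:ℂ) * ((‖f x‖ ^ 6 : ℝ) : ℂ)) := by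
    intro x
    have hE1 : E x * conj (E x) = 1 := by
      rw [Complex.mul_conj, Complex.normSq_eq_norm_sq, hEabs x]; simp
    have hre : ((‖f x‖ : ℝ) : ℂ) ^ 2 * (E x * f x)
        * (conj (E x) * conj (d x + Complex.I * (a:ℂ) * ((‖f x‖ ^ 2 : ℝ):ℂ) * f x))
        = (E x * conj (E x)) * (((‖f x‖ : ℝ) : ℂ) ^ 2 * f x
            * conj (d x + Complex.I * (a:ℂ) * ((‖f x‖ ^ 2 : ℝ):ℂ) * f x)) := by
      ring
    rw [hderiv x, hgE x, norm_mul, hEabs x, one_mul, map_mul (starRingEnd ℂ),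
      hre, hE1, one_mul]
    simp only [hv]
    exact alg2 (f x) (d x) a
  -- integral identities
  have hIvim : Integrable (fun x => (v x).im) := hIv.im
  have hJ : ∫ x, (v x).im = (∫ x, v x).im := by
    have h := Complex.imCLM.integral_comp_comm hIv
    simpa using h
  have hG3 : ∫ x, ‖g x‖ ^ 6 = ∫ x, ‖f x‖ ^ 6 :=
    integral_congr_ae (Filter.Eventually.of_forall fun x => by simp only [ptG3])
  have hG1 : ∫ x, ‖deriv g x‖ ^ 2
      = (∫ x, ‖d x‖ ^ 2) + a ^ 2 * (∫ x, ‖f x‖ ^ 6)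
        - 2 * a * (∫ x, (v x).im) := by
    rw [show (fun x => ‖deriv g x‖ ^ 2) = fun x =>
        ‖d x‖ ^ 2 + a ^ 2 * ‖f x‖ ^ 6 - 2 * a * (v x).im from
      funext ptG1]
    have hIA : Integrable (fun x => ‖d x‖ ^ 2 + a ^ 2 * ‖f x‖ ^ 6) := by
      exact hI1.add (hI6.const_mul _)
    rw [integral_sub hIA (hIvim.const_mul _),
      integral_add hI1 (hI6.const_mul _), integral_const_mul, integral_const_mul]
  have hconst : Integrable (fun x => Complex.I * ((a:ℂ) * ((‖f x‖ ^ 6 : ℝ) : ℂ))) := by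
    have h := (hI6.ofReal (𝕜 := ℂ)).const_mul (Complex.I * (a:ℂ))
    simpa [mul_assoc] using h
  have hIgc : Integrable (fun x => (‖g x‖ : ℂ) ^ 2 * g x * conj (deriv g x)) := by
    rw [show (fun x => (‖g x‖ : ℂ) ^ 2 * g x * conj (deriv g x)) = fun x =>
        v x - Complex.I * ((a:ℂ) * ((‖f x‖ ^ 6 : ℝ) : ℂ)) from funext ptG2]
    exact hIv.sub hconst
  have him : (∫ x, (‖g x‖ : ℂ) ^ 2 * g x * conj (deriv g x)).im
      = (∫ x, (v x).im) - a * (∫ x, ‖f x‖ ^ 6) := by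
    have h1 := Complex.imCLM.integral_comp_comm hIgc
    have h2 : (fun x => ((‖g x‖ : ℂ) ^ 2 * g x * conj (deriv g x)).im)
        = fun x => (v x).im - a * ‖f x‖ ^ 6 := by
      funext x; rw [ptG2 x]; simp [← Complex.ofReal_pow]
    calc (∫ x, (‖g x‖ : ℂ) ^ 2 * g x * conj (deriv g x)).im
        = ∫ x, ((‖g x‖ : ℂ) ^ 2 * g x * conj (deriv g x)).im := by
          simpa using h1.symm
      _ = ∫ x, ((v x).im - a * ‖f x‖ ^ 6) := by rw [h2]
      _ = (∫ x, (v x).im) - a * (∫ x, ‖f x‖ ^ 6) := by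
          rw [integral_sub hIvim (hI6.const_mul a), integral_const_mul]
  rw [hG1, hG3, him, hJ]
  ring
end
end

section
/- Let Q : ℝ → ℝ be a ground state, i.e. Q is twice continuously differentiable, positive everywhere, Q(x) → 0 and Q′(x) → 0 as |x| → ∞, and Q satisfies −Q″ + Q − (3/16)Q⁵ = 0 on ℝ. Then ∫_ℝ Q(x)² dx = 2π, and the energy of Q vanishes: ∫_ℝ Q′(x)² dx = (1/16)∫_ℝ Q(x)⁶ dx. -/
open MeasureTheory ComplexConjugate

noncomputable section

/-- `Q` is a ground state: positive, `C²`, vanishing (with its derivative) at infinity,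
solving `−Q″ + Q − (3/16)Q⁵ = 0`. -/
structure IsGroundState (Q : ℝ → ℝ) : Prop where
  smooth : ContDiff ℝ 2 Q
  pos : ∀ x : ℝ, 0 < Q x
  decay : Filter.Tendsto Q (Filter.cocompact ℝ) (nhds 0)
  decay_deriv : Filter.Tendsto (deriv Q) (Filter.cocompact ℝ) (nhds 0)
  eqn : ∀ x : ℝ, - deriv (deriv Q) x + Q x - (3/16) * (Q x) ^ 5 = 0

open Filter Set Real Topology in
/-- A ground state has mass `2π` and vanishing energy. -/
theorem groundState_mass_and_energy (Q : ℝ → ℝ) (hQ : IsGroundState Q) :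
    (∫ x : ℝ, Q x ^ 2) = 2 * Real.pi ∧
    (∫ x : ℝ, deriv Q x ^ 2) = (1/16) * ∫ x : ℝ, Q x ^ 6 := by
  -- Basic differentiability
  have hsm : ContDiff ℝ ((1 : ℕ∞) + 1) Q := by
    have := hQ.smooth; norm_num at this ⊢; exact this
  have hQdiff : Differentiable ℝ Q := hQ.smooth.differentiable (by norm_num)
  have hQ'c1 : ContDiff ℝ 1 (deriv Q) := (contDiff_succ_iff_deriv.mp hsm).2.2
  have hQ'diff : Differentiable ℝ (deriv Q) := hQ'c1.differentiable one_ne_zero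
  have hQx : ∀ x : ℝ, HasDerivAt Q (deriv Q x) x := fun x => (hQdiff x).hasDerivAt
  have hQ'x : ∀ x : ℝ, HasDerivAt (deriv Q) (deriv (deriv Q) x) x :=
    fun x => (hQ'diff x).hasDerivAt
  have heqn : ∀ x : ℝ, deriv (deriv Q) x = Q x - (3/16) * Q x ^ 5 := by
    intro x; have := hQ.eqn x; linarith
  -- First integral: (Q')² = Q² - Q⁶/16
  set F : ℝ → ℝ := fun x => deriv Q x ^ 2 - Q x ^ 2 + Q x ^ 6 / 16 with hFdef
  have hF : ∀ y : ℝ, HasDerivAt F 0 y := by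
    intro y
    have h := (((hQ'x y).pow 2).sub ((hQx y).pow 2)).add (((hQx y).pow 6).div_const 16)
    convert h using 1
    case e'_4 => rfl
    case e'_5 => rfl
    case e'_8 => rfl
    rw [heqn y]; ring
  have hFconst : ∀ x y : ℝ, F x = F y :=
    is_const_of_deriv_eq_zero (fun y => (hF y).differentiableAt) (fun y => (hF y).deriv)
  have hFlim : Tendsto F (cocompact ℝ) (𝓝 0) := by
    have h := ((hQ.decay_deriv.pow 2).sub (hQ.decay.pow 2)).add ((hQ.decay.pow 6).div_const 16)
    convert h using 2
    norm_num
  have hF0 : ∀ x : ℝ, F x = 0 := by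
    intro x
    have h1 : Tendsto F (cocompact ℝ) (𝓝 (F x)) := by
      have : F = fun _ => F x := funext fun y => hFconst y x
      rw [this]; exact tendsto_const_nhds
    exact tendsto_nhds_unique h1 hFlim
  have hfi : ∀ x : ℝ, deriv Q x ^ 2 = Q x ^ 2 - Q x ^ 6 / 16 := by
    intro x; have := hF0 x; simp only [hFdef] at this; linarith
  -- bound Q⁴ ≤ 16
  have hb : ∀ x : ℝ, Q x ^ 4 ≤ 16 := by
    intro x
    nlinarith [hfi x, sq_nonneg (deriv Q x), hQ.pos x, sq_nonneg (Q x)]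
  -- ψ = Q'/Q
  set ψ : ℝ → ℝ := fun x => deriv Q x / Q x with hψdef
  have hψsq : ∀ x : ℝ, ψ x ^ 2 = 1 - Q x ^ 4 / 16 := by
    intro x
    have hne : Q x ≠ 0 := (hQ.pos x).ne'
    simp only [hψdef]
    field_simp
    nlinarith [hfi x, hQ.pos x]
  have hψlt : ∀ x : ℝ, ψ x < 1 := by
    intro x; nlinarith [hψsq x, pow_pos (hQ.pos x) 4]
  have hψgt : ∀ x : ℝ, -1 < ψ x := by
    intro x; nlinarith [hψsq x, pow_pos (hQ.pos x) 4]
  have hψderiv : ∀ x : ℝ, HasDerivAt ψ (-(Q x ^ 4 / 8)) x := by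
    intro x
    have hne : Q x ≠ 0 := (hQ.pos x).ne'
    have h := (hQ'x x).div (hQx x) hne
    convert h using 1
    case e'_4 => rfl
    case e'_5 => rfl
    case e'_8 => rfl
    rw [heqn x]
    field_simp
    nlinarith [hfi x]
  -- θ = arccos ψ
  set θ : ℝ → ℝ := fun x => Real.arccos (ψ x) with hθdef
  have hθderiv : ∀ x : ℝ, HasDerivAt θ (Q x ^ 2 / 2) x := by
    intro x
    have h := (Real.hasDerivAt_arccos (hψgt x).ne' (hψlt x).ne).comp x (hψderiv x)
    convert h using 1
    case e'_4 => rfl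
    case e'_5 => rfl
    case e'_8 => rfl
    have hs : Real.sqrt (1 - ψ x ^ 2) = Q x ^ 2 / 4 := by
      rw [hψsq x]
      rw [show 1 - (1 - Q x ^ 4 / 16) = (Q x ^ 2 / 4) ^ 2 by ring]
      exact Real.sqrt_sq (by positivity)
    rw [hs]
    have hne : Q x ≠ 0 := (hQ.pos x).ne'
    field_simp
    ring
  -- ψ is antitone
  have hψanti : Antitone ψ := by
    apply antitone_of_deriv_nonpos
    · exact fun x => (hψderiv x).differentiableAt
    · intro x
      rw [(hψderiv x).deriv]
      have := pow_pos (hQ.pos x) 4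
      linarith
  -- ψ² → 1 along cocompact
  have hψsqlim : Tendsto (fun x => ψ x ^ 2) (cocompact ℝ) (𝓝 1) := by
    have h : Tendsto (fun x : ℝ => 1 - Q x ^ 4 / 16) (cocompact ℝ) (𝓝 (1 - 0 ^ 4 / 16)) :=
      ((hQ.decay.pow 4).div_const 16).const_sub 1
    have h' : Tendsto (fun x : ℝ => 1 - Q x ^ 4 / 16) (cocompact ℝ) (𝓝 1) := by
      convert h using 2
      norm_num
    exact h'.congr fun x => (hψsq x).symm
  -- limits of ψ
  have hψtop : Tendsto ψ atTop (𝓝 (-1)) := by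
    have hbdd : BddBelow (range ψ) := ⟨-1, fun y ⟨x, hx⟩ => hx ▸ (hψgt x).le⟩
    have ht := tendsto_atTop_ciInf hψanti hbdd
    set L := ⨅ x, ψ x with hL
    have hL2 : L ^ 2 = 1 :=
      tendsto_nhds_unique (ht.pow 2) (hψsqlim.mono_left _root_.atTop_le_cocompact)
    have hLle : L ≤ ψ 0 := ciInf_le hbdd 0
    have : L = -1 := by
      rcases mul_eq_zero.mp (show (L - 1) * (L + 1) = 0 by nlinarith) with h | h
      · exfalso; have := hψlt 0; nlinarith
      · linarith
    rwa [this] at ht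
  have hψbot : Tendsto ψ atBot (𝓝 1) := by
    have hbdd : BddAbove (range ψ) := ⟨1, fun y ⟨x, hx⟩ => hx ▸ (hψlt x).le⟩
    have ht := tendsto_atBot_ciSup hψanti hbdd
    set L := ⨆ x, ψ x with hL
    have hL2 : L ^ 2 = 1 :=
      tendsto_nhds_unique (ht.pow 2) (hψsqlim.mono_left _root_.atBot_le_cocompact)
    have hLge : ψ 0 ≤ L := le_ciSup hbdd 0
    have : L = 1 := by
      rcases mul_eq_zero.mp (show (L - 1) * (L + 1) = 0 by nlinarith) with h | h
      · linarith
      · exfalso; have := hψgt 0; nlinarith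
    rwa [this] at ht
  -- limits of θ
  have hθtop : Tendsto θ atTop (𝓝 π) := by
    have := (Real.continuous_arccos.tendsto (-1)).comp hψtop
    rwa [Real.arccos_neg_one] at this
  have hθbot : Tendsto θ atBot (𝓝 0) := by
    have := (Real.continuous_arccos.tendsto 1).comp hψbot
    rwa [Real.arccos_one] at this
  -- integral over Ioi 0
  have hIoiInt : IntegrableOn (fun x => Q x ^ 2 / 2) (Ioi 0) :=
    integrableOn_Ioi_deriv_of_nonneg' (fun x _ => hθderiv x)
      (fun x _ => by positivity) hθtop
  have hIoiVal : ∫ x in Ioi (0:ℝ), Q x ^ 2 / 2 = π - θ 0 :=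
    integral_Ioi_of_hasDerivAt_of_nonneg' (fun x _ => hθderiv x)
      (fun x _ => by positivity) hθtop
  -- reflected function for Iic side
  set g : ℝ → ℝ := fun x => θ (-x) with hgdef
  have hgderiv : ∀ x : ℝ, HasDerivAt g (-(Q (-x) ^ 2 / 2)) x := by
    intro x
    have h := (hθderiv (-x)).comp x (hasDerivAt_neg x)
    convert h using 1
    case e'_4 => rfl
    case e'_5 => rfl
    case e'_8 => rfl
    ring
  have hgtop : Tendsto g atTop (𝓝 0) := hθbot.comp tendsto_neg_atTop_atBot
  have hIicInt' : IntegrableOn (fun x => -(Q (-x) ^ 2 / 2)) (Ioi 0) :=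
    integrableOn_Ioi_deriv_of_nonpos' (fun x _ => hgderiv x)
      (fun x _ => neg_nonpos.mpr (by positivity)) hgtop
  have hIicVal' : ∫ x in Ioi (0:ℝ), -(Q (-x) ^ 2 / 2) = 0 - g 0 :=
    integral_Ioi_of_hasDerivAt_of_nonpos' (fun x _ => hgderiv x)
      (fun x _ => neg_nonpos.mpr (by positivity)) hgtop
  have hg0 : g 0 = θ 0 := by simp [hgdef]
  have hIicVal : ∫ x in Iic (0:ℝ), Q x ^ 2 / 2 = θ 0 := by
    have h1 : ∫ x in Ioi (0:ℝ), Q (-x) ^ 2 / 2 = θ 0 := by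
      have := hIicVal'
      rw [integral_neg] at this
      rw [hg0] at this
      linarith
    have h2 := integral_comp_neg_Ioi (0:ℝ) (fun x => Q x ^ 2 / 2)
    rw [neg_zero] at h2
    rw [← h2]
    exact h1
  have hIicInt : IntegrableOn (fun x => Q x ^ 2 / 2) (Iic 0) := by
    have h1 : IntegrableOn (fun x => Q (-x) ^ 2 / 2) (Ioi 0) := by
      exact hIicInt'.neg.congr (Filter.Eventually.of_forall fun x => by simp)
    have h2 := ((Measure.measurePreserving_neg (volume : Measure ℝ)).integrableOn_comp_preimage
      (Homeomorph.neg ℝ).measurableEmbedding).mpr h1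
    simp only [Function.comp_def, neg_neg, neg_preimage, neg_Ioi, neg_zero] at h2
    rwa [IntegrableOn, Measure.restrict_congr_set Iio_ae_eq_Iic] at h2
  -- mass
  have hIntHalf : Integrable (fun x => Q x ^ 2 / 2) := by
    rw [← integrableOn_univ, ← Set.Iic_union_Ioi (a := (0:ℝ))]
    exact hIicInt.union hIoiInt
  have hInt2 : Integrable (fun x => Q x ^ 2) := by
    have h := hIntHalf.const_mul 2
    have : (fun x => Q x ^ 2) = fun x => 2 * (Q x ^ 2 / 2) := by funext x; ring
    rwa [this]
  have hmass : (∫ x : ℝ, Q x ^ 2) = 2 * π := by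
    have hsplit : (∫ x in Iic (0:ℝ), Q x ^ 2 / 2) + ∫ x in Ioi (0:ℝ), Q x ^ 2 / 2
        = ∫ x : ℝ, Q x ^ 2 / 2 := intervalIntegral.integral_Iic_add_Ioi hIicInt hIoiInt
    have hhalf : (∫ x : ℝ, Q x ^ 2 / 2) = π := by
      rw [← hsplit, hIicVal, hIoiVal]; ring
    have : (fun x => Q x ^ 2) = fun x => 2 * (Q x ^ 2 / 2) := by funext x; ring
    rw [this, integral_const_mul, hhalf]
  -- integrability of Q⁶
  have hInt6 : Integrable (fun x => Q x ^ 6) := by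
    refine (hInt2.const_mul 16).mono'
      ((hQ.smooth.continuous.pow 6).aestronglyMeasurable) (ae_of_all _ fun x => ?_)
    rw [Real.norm_eq_abs, abs_of_nonneg (by positivity)]
    nlinarith [hb x, sq_nonneg (Q x), hQ.pos x]
  -- ∫ Q⁶ = 16 π, via (Q Q')' = 2Q² - Q⁶/4
  set G : ℝ → ℝ := fun x => Q x * deriv Q x with hGdef
  have hGderiv : ∀ x : ℝ, HasDerivAt G (2 * Q x ^ 2 - Q x ^ 6 / 4) x := by
    intro x
    have h := (hQx x).mul (hQ'x x)
    convert h using 1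
    case e'_4 => rfl
    case e'_5 => rfl
    case e'_8 => rfl
    rw [heqn x]
    nlinarith [hfi x]
  have hGlim : Tendsto G (cocompact ℝ) (𝓝 0) := by
    have h := hQ.decay.mul hQ.decay_deriv
    convert h using 2
    norm_num
  have hIntG' : Integrable (fun x => 2 * Q x ^ 2 - Q x ^ 6 / 4) :=
    (hInt2.const_mul 2).sub (hInt6.div_const 4)
  have hGIic : ∫ x in Iic (0:ℝ), (2 * Q x ^ 2 - Q x ^ 6 / 4) = G 0 - 0 :=
    integral_Iic_of_hasDerivAt_of_tendsto' (fun x _ => hGderiv x)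
      hIntG'.integrableOn (hGlim.mono_left _root_.atBot_le_cocompact)
  have hGIoi : ∫ x in Ioi (0:ℝ), (2 * Q x ^ 2 - Q x ^ 6 / 4) = 0 - G 0 :=
    integral_Ioi_of_hasDerivAt_of_tendsto' (fun x _ => hGderiv x)
      hIntG'.integrableOn (hGlim.mono_left _root_.atTop_le_cocompact)
  have hGtotal : (∫ x : ℝ, (2 * Q x ^ 2 - Q x ^ 6 / 4)) = 0 := by
    rw [← intervalIntegral.integral_Iic_add_Ioi (b := (0:ℝ)) hIntG'.integrableOn hIntG'.integrableOn,
      hGIic, hGIoi]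
    ring
  have hsix : (∫ x : ℝ, Q x ^ 6) = 16 * π := by
    have hsub : (∫ x : ℝ, (2 * Q x ^ 2 - Q x ^ 6 / 4))
        = (∫ x : ℝ, 2 * Q x ^ 2) - ∫ x : ℝ, Q x ^ 6 / 4 :=
      integral_sub (hInt2.const_mul 2) (hInt6.div_const 4)
    rw [hsub, integral_const_mul, integral_div, hmass] at hGtotal
    linarith
  constructor
  · exact hmass
  · have h1 : (fun x => deriv Q x ^ 2) = fun x => Q x ^ 2 - Q x ^ 6 / 16 :=
      funext hfi
    rw [h1, integral_sub hInt2 (hInt6.div_const 16), integral_div, hmass, hsix]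
    ring
end
end

section
/- For every ε > 0 there exists a Schwartz function f : ℝ → ℂ such that ∫_ℝ |f(x)|² dx < 2π + ε and its energy is negative: ∫_ℝ |f′(x)|² dx − (1/16)∫_ℝ |f(x)|⁶ dx < 0. -/
open MeasureTheory ComplexConjugate Real Filter Set Topology

noncomputable section

namespace NegEnergyAux

/-- The base profile `u x = (cosh x)^(-1/2)`. -/
def u (x : ℝ) : ℝ := Real.cosh x ^ (-(1/2) : ℝ)

lemma u_pos (x : ℝ) : 0 < u x := Real.rpow_pos_of_pos (Real.cosh_pos x) _

lemma u_hasDerivAt (x : ℝ) :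
    HasDerivAt u (-(1/2) * (u x * Real.tanh x)) x := by
  have h := (Real.hasDerivAt_cosh x).rpow_const
    (p := (-(1/2) : ℝ)) (Or.inl (ne_of_gt (Real.cosh_pos x)))
  refine h.congr_deriv ?_
  have hc : (0:ℝ) < Real.cosh x := Real.cosh_pos x
  rw [Real.tanh_eq_sinh_div_cosh,
    show (-(1/2) : ℝ) - 1 = (-(1/2)) + (-1) by ring,
    Real.rpow_add hc, Real.rpow_neg_one]
  unfold u
  field_simp

lemma tanh_hasDerivAt (x : ℝ) :
    HasDerivAt Real.tanh (1 - Real.tanh x ^ 2) x := by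
  have hc : (0:ℝ) < Real.cosh x := Real.cosh_pos x
  have h := (Real.hasDerivAt_sinh x).div (Real.hasDerivAt_cosh x) (ne_of_gt hc)
  have he : Real.tanh = fun y => Real.sinh y / Real.cosh y :=
    funext fun y => Real.tanh_eq_sinh_div_cosh y
  rw [he]
  refine h.congr_deriv ?_
  have hsq := Real.cosh_sq_sub_sinh_sq x
  field_simp

lemma u_contDiff : ContDiff ℝ (⊤ : ℕ∞) u := by
  rw [contDiff_iff_contDiffAt]
  intro x
  exact (Real.contDiffAt_rpow_const_of_ne
    (ne_of_gt (Real.cosh_pos x))).comp x Real.contDiff_cosh.contDiffAt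

lemma iter_exists (n : ℕ) : ∃ P : Polynomial ℝ, ∀ x,
    iteratedDeriv n u x = u x * P.eval (Real.tanh x) := by
  induction n with
  | zero => exact ⟨1, by simp [iteratedDeriv_zero]⟩
  | succ n ih =>
    obtain ⟨P, hP⟩ := ih
    refine ⟨Polynomial.C (-(1/2)) * (Polynomial.X * P)
      + (1 - Polynomial.X ^ 2) * Polynomial.derivative P, fun x => ?_⟩
    rw [iteratedDeriv_succ]
    have he : iteratedDeriv n u = fun y => u y * P.eval (Real.tanh y) := funext hP
    rw [he]
    have hd : HasDerivAt (fun y => u y * P.eval (Real.tanh y))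
        (-(1/2) * (u x * Real.tanh x) * P.eval (Real.tanh x)
          + u x * ((Polynomial.derivative P).eval (Real.tanh x) * (1 - Real.tanh x ^ 2))) x :=
      (u_hasDerivAt x).mul ((P.hasDerivAt (Real.tanh x)).comp x (tanh_hasDerivAt x))
    rw [hd.deriv]
    simp only [Polynomial.eval_add, Polynomial.eval_mul, Polynomial.eval_sub,
      Polynomial.eval_pow, Polynomial.eval_X, Polynomial.eval_C, Polynomial.eval_one]
    ring

lemma abs_tanh_le_one (x : ℝ) : |Real.tanh x| ≤ 1 := by
  have hc : (0:ℝ) < Real.cosh x := Real.cosh_pos x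
  rw [Real.tanh_eq_sinh_div_cosh, abs_div, abs_of_pos hc, div_le_one hc]
  nlinarith [Real.cosh_sq_sub_sinh_sq x, abs_nonneg (Real.sinh x), sq_abs (Real.sinh x)]

lemma u_sq (x : ℝ) : u x ^ 2 = (Real.cosh x)⁻¹ := by
  have hc : (0:ℝ) < Real.cosh x := Real.cosh_pos x
  unfold u
  rw [← Real.rpow_natCast (Real.cosh x ^ (-(1/2):ℝ)) 2, ← Real.rpow_mul hc.le]
  norm_num [Real.rpow_neg_one]

lemma exp_abs_le (x : ℝ) : Real.exp |x| ≤ 2 * Real.cosh x := by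
  rw [Real.cosh_eq]
  rcases abs_cases x with ⟨h, _⟩ | ⟨h, _⟩ <;> rw [h] <;>
    nlinarith [Real.exp_pos x, Real.exp_pos (-x)]

lemma weight_bound (k : ℕ) : ∃ C : ℝ, ∀ x : ℝ, |x| ^ k * u x ≤ C := by
  refine ⟨Real.sqrt (2 * (2 * k).factorial), fun x => ?_⟩
  have hc : (0:ℝ) < Real.cosh x := Real.cosh_pos x
  have h1 : |x| ^ (2 * k) ≤ (2 * k).factorial * Real.exp |x| := by
    have hs := Real.sum_le_exp_of_nonneg (abs_nonneg x) (2 * k + 1)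
    have hsingle : |x| ^ (2 * k) / ((2 * k).factorial : ℝ) ≤
        ∑ i ∈ Finset.range (2 * k + 1), |x| ^ i / (i.factorial : ℝ) := by
      refine Finset.single_le_sum (f := fun i => |x| ^ i / (i.factorial : ℝ)) ?_ ?_
      · intro i _; positivity
      · simp
    have hfac : (0:ℝ) < ((2 * k).factorial : ℝ) := by positivity
    rw [div_le_iff₀ hfac] at hsingle
    calc |x| ^ (2 * k) ≤ (∑ i ∈ Finset.range (2 * k + 1), |x| ^ i / (i.factorial : ℝ))
        * ((2 * k).factorial : ℝ) := hsingle
      _ ≤ Real.exp |x| * ((2 * k).factorial : ℝ) := by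
          apply mul_le_mul_of_nonneg_right hs hfac.le
      _ = (2 * k).factorial * Real.exp |x| := by ring
  have h2 : (|x| ^ k * u x) ^ 2 ≤ 2 * (2 * k).factorial := by
    have : (|x| ^ k * u x) ^ 2 = |x| ^ (2 * k) * (Real.cosh x)⁻¹ := by
      rw [mul_pow, u_sq, ← pow_mul, mul_comm k 2]
    rw [this]
    have hexp := exp_abs_le x
    rw [mul_inv_le_iff₀ hc]
    calc |x| ^ (2*k) ≤ (2 * k).factorial * Real.exp |x| := h1
      _ ≤ (2 * k).factorial * (2 * Real.cosh x) := by
          apply mul_le_mul_of_nonneg_left hexp (by positivity)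
      _ = 2 * (2 * k).factorial * Real.cosh x := by ring
  have h3 : 0 ≤ |x| ^ k * u x := mul_nonneg (by positivity) (u_pos x).le
  nlinarith [Real.sq_sqrt (show (0:ℝ) ≤ 2 * (2 * k).factorial by positivity),
    Real.sqrt_nonneg (2 * (2 * k).factorial : ℝ)]

/-- The base Schwartz function `x ↦ (cosh x)^(-1/2)` as a complex-valued Schwartz map. -/
def base : SchwartzMap ℝ ℂ where
  toFun := fun x => (u x : ℂ)
  smooth' := Complex.ofRealCLM.contDiff.comp u_contDiff
  decay' := by
    intro k n
    obtain ⟨P, hP⟩ := iter_exists n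
    obtain ⟨CP, hCP⟩ := (isCompact_Icc (a := (-1:ℝ)) (b := 1)).exists_bound_of_continuousOn
      (P.continuous_aeval.continuousOn)
    obtain ⟨CW, hCW⟩ := weight_bound k
    have hCP0 : 0 ≤ CP := le_trans (norm_nonneg _) (hCP 0 (by norm_num))
    have hCW0 : 0 ≤ CW := le_trans (mul_nonneg (by positivity) (u_pos 0).le) (hCW 0)
    refine ⟨CW * CP, fun x => ?_⟩
    have h1 : ‖iteratedFDeriv ℝ n (fun x => (u x : ℂ)) x‖ = |iteratedDeriv n u x| := by
      have he : (fun x => (u x : ℂ)) = (Complex.ofRealLI : ℝ →ₗᵢ[ℝ] ℂ) ∘ u := rfl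
      rw [he, (Complex.ofRealLI : ℝ →ₗᵢ[ℝ] ℂ).norm_iteratedFDeriv_comp_left u_contDiff.contDiffAt (mod_cast le_top),
        norm_iteratedFDeriv_eq_norm_iteratedDeriv, Real.norm_eq_abs]
    rw [h1, hP x, Real.norm_eq_abs, abs_mul, abs_of_pos (u_pos x)]
    have htanh : Real.tanh x ∈ Icc (-1:ℝ) 1 := by
      have := abs_tanh_le_one x
      constructor <;> [linarith [neg_abs_le (Real.tanh x)]; linarith [le_abs_self (Real.tanh x)]]
    calc |x| ^ k * (u x * |P.eval (Real.tanh x)|)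
        = (|x| ^ k * u x) * |P.eval (Real.tanh x)| := by ring
      _ ≤ CW * CP := by
          apply mul_le_mul (hCW x) ?_ (abs_nonneg _) hCW0
          simpa [Polynomial.aeval_def, Real.norm_eq_abs] using hCP _ htanh


lemma base_apply (x : ℝ) : base x = (u x : ℂ) := rfl

end NegEnergyAux
namespace NegEnergyAux

/-- FTC on the whole real line for nonnegative derivatives. -/
lemma FTC_line {F h : ℝ → ℝ} {a b : ℝ}
    (hd : ∀ x, HasDerivAt F (h x) x) (h0 : ∀ x, 0 ≤ h x)
    (hbot : Tendsto F atBot (𝓝 a)) (htop : Tendsto F atTop (𝓝 b)) :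
    Integrable h ∧ ∫ x, h x = b - a := by
  have hIoi : IntegrableOn h (Ioi 0) :=
    integrableOn_Ioi_deriv_of_nonneg' (fun x _ => hd x) (fun x _ => h0 x) htop
  have hIoiVal : ∫ x in Ioi 0, h x = b - F 0 :=
    integral_Ioi_of_hasDerivAt_of_tendsto' (fun x _ => hd x) hIoi htop
  have hdneg : ∀ x : ℝ, HasDerivAt (fun y => -F (-y)) (h (-x)) x := by
    intro x
    have := ((hd (-x)).comp x (hasDerivAt_neg x)).neg
    exact this.congr_deriv (by ring)
  have htopneg : Tendsto (fun y : ℝ => -F (-y)) atTop (𝓝 (-a)) :=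
    (hbot.comp tendsto_neg_atTop_atBot).neg
  have hIoi' : IntegrableOn (fun x => h (-x)) (Ioi 0) :=
    integrableOn_Ioi_deriv_of_nonneg' (fun x _ => hdneg x) (fun x _ => h0 _) htopneg
  have hIoiVal' : ∫ x in Ioi 0, h (-x) = -a - -F (-0) :=
    integral_Ioi_of_hasDerivAt_of_tendsto' (fun x _ => hdneg x) hIoi' htopneg
  have hIic : IntegrableOn h (Iic 0) := by
    have m : MeasurableEmbedding fun x : ℝ => -x :=
      (Homeomorph.neg ℝ).measurableEmbedding
    have h1 : IntegrableOn (fun x => h (-x)) (Ici 0) :=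
      Iff.mpr integrableOn_Ici_iff_integrableOn_Ioi hIoi'
    have h3 : IntegrableOn (h ∘ (fun x : ℝ => -x)) ((fun x : ℝ => -x) ⁻¹' (Iic 0)) volume := by
      simpa [Function.comp_def, neg_preimage, neg_Iic, neg_zero] using h1
    have h4 := (m.integrableOn_map_iff (f := h) (s := Iic (0:ℝ))).mpr h3
    rwa [Measure.map_neg_eq_self] at h4
  have hIicVal : ∫ x in Iic 0, h x = F 0 - a := by
    have := integral_comp_neg_Ioi (0:ℝ) h
    rw [neg_zero] at this
    rw [← this, hIoiVal']
    simp only [neg_zero]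
    ring
  have hint : Integrable h := by
    rw [← integrableOn_univ, ← Set.Iic_union_Ioi (a := (0:ℝ))]
    exact hIic.union hIoi
  refine ⟨hint, ?_⟩
  rw [← intervalIntegral.integral_Iic_add_Ioi hIic hIoi, hIicVal, hIoiVal]
  ring

lemma tendsto_sinh_atTop : Tendsto Real.sinh atTop atTop := by
  have h1 : Tendsto (fun x => (Real.exp x - 1)/2) atTop atTop := by
    have := tendsto_atTop_add_const_right atTop (-1) Real.tendsto_exp_atTop
    exact this.atTop_div_const (by norm_num)
  apply tendsto_atTop_mono' atTop ?_ h1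
  filter_upwards [eventually_ge_atTop (0:ℝ)] with x hx
  rw [Real.sinh_eq]
  have : Real.exp (-x) ≤ 1 := Real.exp_le_one_iff.mpr (by linarith)
  linarith

lemma tendsto_sinh_atBot : Tendsto Real.sinh atBot atBot := by
  have h := tendsto_neg_atTop_atBot.comp
    (tendsto_sinh_atTop.comp tendsto_neg_atBot_atTop)
  refine h.congr fun x => ?_
  simp [Function.comp, Real.sinh_neg]

lemma tendsto_arctan_sinh_atTop :
    Tendsto (fun x => Real.arctan (Real.sinh x)) atTop (𝓝 (π/2)) :=
  (Real.tendsto_arctan_atTop.mono_right nhdsWithin_le_nhds).comp tendsto_sinh_atTop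

lemma tendsto_arctan_sinh_atBot :
    Tendsto (fun x => Real.arctan (Real.sinh x)) atBot (𝓝 (-(π/2))) :=
  (Real.tendsto_arctan_atBot.mono_right nhdsWithin_le_nhds).comp tendsto_sinh_atBot

lemma sech_deriv (x : ℝ) :
    HasDerivAt (fun y => Real.arctan (Real.sinh y)) ((Real.cosh x)⁻¹) x := by
  have hc : (0:ℝ) < Real.cosh x := Real.cosh_pos x
  have h := (Real.hasDerivAt_arctan (Real.sinh x)).comp x (Real.hasDerivAt_sinh x)
  refine h.congr_deriv ?_
  have hsq := Real.cosh_sq x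
  field_simp
  nlinarith [hsq]

lemma sech_int : Integrable (fun x : ℝ => (Real.cosh x)⁻¹) ∧
    ∫ x : ℝ, (Real.cosh x)⁻¹ = π := by
  have h := FTC_line (h := fun x => (Real.cosh x)⁻¹) sech_deriv
    (fun x => (inv_nonneg).mpr (Real.cosh_pos x).le)
    tendsto_arctan_sinh_atBot tendsto_arctan_sinh_atTop
  refine ⟨h.1, ?_⟩
  rw [h.2]; ring

lemma sech3_deriv (x : ℝ) :
    HasDerivAt (fun y => (Real.sinh y / Real.cosh y ^ 2 + Real.arctan (Real.sinh y)) / 2)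
      (((Real.cosh x)⁻¹) ^ 3) x := by
  have hc : (0:ℝ) < Real.cosh x := Real.cosh_pos x
  have h1 : HasDerivAt (fun y => Real.sinh y / Real.cosh y ^ 2)
      ((Real.cosh x * Real.cosh x ^ 2 - Real.sinh x * (2 * Real.cosh x ^ 1 * Real.sinh x))
        / (Real.cosh x ^ 2) ^ 2) x :=
    (Real.hasDerivAt_sinh x).div ((Real.hasDerivAt_cosh x).pow 2) (by positivity)
  have h := (h1.add (sech_deriv x)).div_const 2
  refine h.congr_deriv ?_
  have hsq := Real.cosh_sq x
  field_simp
  ring_nf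
  linear_combination 2 * hsq

lemma tendsto_sech_tanh_atTop :
    Tendsto (fun x => Real.sinh x / Real.cosh x ^ 2) atTop (𝓝 0) := by
  have hcosh : Tendsto Real.cosh atTop atTop := by
    apply tendsto_atTop_mono (fun x => ?_)
      (Real.tendsto_exp_atTop.atTop_div_const (show (0:ℝ) < 2 by norm_num))
    rw [Real.cosh_eq]
    have := (Real.exp_pos (-x)).le
    linarith
  apply tendsto_of_tendsto_of_tendsto_of_le_of_le' (g := fun _ => (0:ℝ))
    (h := fun x => (Real.cosh x)⁻¹) tendsto_const_nhds hcosh.inv_tendsto_atTop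
  · filter_upwards [eventually_ge_atTop (0:ℝ)] with x hx
    have hs : 0 ≤ Real.sinh x := by
      rcases eq_or_lt_of_le hx with h|h
      · simp [← h]
      · exact (Real.sinh_pos_iff.mpr h).le
    positivity
  · filter_upwards with x
    have hc : (0:ℝ) < Real.cosh x := Real.cosh_pos x
    rw [div_le_iff₀ (by positivity)]
    have hs : Real.sinh x ≤ Real.cosh x := by
      nlinarith [Real.cosh_sq_sub_sinh_sq x, Real.cosh_pos x, abs_nonneg (Real.sinh x),
        sq_abs (Real.sinh x), le_abs_self (Real.sinh x)]
    calc Real.sinh x ≤ Real.cosh x := hs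
      _ = (Real.cosh x)⁻¹ * Real.cosh x ^ 2 := by field_simp
  
lemma odd_tendsto_atBot {F : ℝ → ℝ} {b : ℝ} (hodd : ∀ x, F (-x) = -F x)
    (h : Tendsto F atTop (𝓝 b)) : Tendsto F atBot (𝓝 (-b)) := by
  have h2 := (h.comp tendsto_neg_atBot_atTop).neg
  refine h2.congr fun x => ?_
  simp only [Function.comp_apply, hodd x, neg_neg]

lemma sech3_int : Integrable (fun x : ℝ => ((Real.cosh x)⁻¹) ^ 3) ∧
    ∫ x : ℝ, ((Real.cosh x)⁻¹) ^ 3 = π / 2 := by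
  set F := fun y => (Real.sinh y / Real.cosh y ^ 2 + Real.arctan (Real.sinh y)) / 2 with hF
  have htop : Tendsto F atTop (𝓝 (π/4)) := by
    have := (tendsto_sech_tanh_atTop.add tendsto_arctan_sinh_atTop).div_const 2
    convert this using 2
    ring
  have hbot : Tendsto F atBot (𝓝 (-(π/4))) := by
    apply odd_tendsto_atBot (fun x => ?_) htop
    simp only [hF, Real.sinh_neg, Real.cosh_neg, Real.arctan_neg]
    ring
  have h := FTC_line sech3_deriv (fun x => by positivity) hbot htop
  refine ⟨h.1, ?_⟩
  rw [h.2]; ring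

lemma sech_tanh_sq (x : ℝ) :
    (Real.cosh x)⁻¹ * Real.tanh x ^ 2 = (Real.cosh x)⁻¹ - ((Real.cosh x)⁻¹) ^ 3 := by
  have hc : (0:ℝ) < Real.cosh x := Real.cosh_pos x
  rw [Real.tanh_eq_sinh_div_cosh]
  have hsq := Real.cosh_sq_sub_sinh_sq x
  field_simp
  linear_combination (-1) * hsq

lemma sech_tanh_int : ∫ x : ℝ, (Real.cosh x)⁻¹ * Real.tanh x ^ 2 = π / 2 := by
  have he : (fun x : ℝ => (Real.cosh x)⁻¹ * Real.tanh x ^ 2)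
      = fun x => (Real.cosh x)⁻¹ - ((Real.cosh x)⁻¹) ^ 3 := funext sech_tanh_sq
  rw [he, integral_sub sech_int.1 sech3_int.1, sech_int.2, sech3_int.2]
  ring

end NegEnergyAux

open NegEnergyAux in
/-- For every `ε > 0` there is a Schwartz function with mass `< 2π + ε`
and strictly negative energy `E(f) = ∫|f′|² − (1/16)∫|f|⁶ < 0`. -/
theorem exists_negative_energy_small_mass (ε : ℝ) (hε : 0 < ε) :
    ∃ f : SchwartzMap ℝ ℂ,
      (∫ x : ℝ, ‖f x‖ ^ 2) < 2 * Real.pi + ε ∧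
      (∫ x : ℝ, ‖deriv (fun y : ℝ => f y) x‖ ^ 2)
        - (1/16) * (∫ x : ℝ, ‖f x‖ ^ 6) < 0 := by
  set δ : ℝ := min 1 (ε/4) with hδdef
  have hδpos : 0 < δ := lt_min one_pos (by positivity)
  have hδε : δ ≤ ε/4 := min_le_right _ _
  set A : ℝ := Real.sqrt (2 + δ) with hAdef
  have hA2 : A ^ 2 = 2 + δ := Real.sq_sqrt (by positivity)
  have hApos : 0 < A := Real.sqrt_pos.mpr (by positivity)
  have habs : ∀ x : ℝ, ‖(A • base) x‖ = A * u x := by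
    intro x
    rw [SchwartzMap.smul_apply, base_apply, Complex.real_smul, norm_mul,
      Complex.norm_real, Complex.norm_real, Real.norm_of_nonneg hApos.le, Real.norm_of_nonneg (u_pos x).le]
  refine ⟨A • base, ?_, ?_⟩
  · have h1 : (fun x : ℝ => ‖(A • base) x‖ ^ 2)
        = fun x => A ^ 2 * (Real.cosh x)⁻¹ := by
      funext x
      rw [habs x, mul_pow, u_sq]
    rw [h1, integral_const_mul, sech_int.2]
    nlinarith [Real.pi_pos, Real.pi_lt_d2, hδpos, hδε]
  · have hderiv : ∀ x : ℝ, deriv (fun y : ℝ => (A • base) y) x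
        = ((A * (-(1/2) * (u x * Real.tanh x)) : ℝ) : ℂ) := by
      intro x
      have hb : HasDerivAt (fun y : ℝ => ((u y : ℝ) : ℂ))
          (((-(1/2) * (u x * Real.tanh x) : ℝ) : ℂ)) x := (u_hasDerivAt x).ofReal_comp
      have h2 : HasDerivAt (fun y : ℝ => (A • base) y)
          (A • (((-(1/2) * (u x * Real.tanh x) : ℝ) : ℂ))) x := by
        have h3 := hb.const_smul A
        have he : (fun y : ℝ => (A • base) y) = fun y : ℝ => A • ((u y : ℝ) : ℂ) := by
          funext y
          rw [SchwartzMap.smul_apply, base_apply]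
        rw [he]
        exact h3
      rw [h2.deriv, Complex.real_smul]
      push_cast
      ring
    have h2 : (fun x : ℝ => ‖deriv (fun y : ℝ => (A • base) y) x‖ ^ 2)
        = fun x => A ^ 2 / 4 * ((Real.cosh x)⁻¹ * Real.tanh x ^ 2) := by
      funext x
      rw [hderiv x, Complex.norm_real, Real.norm_eq_abs, sq_abs]
      have he : (A * (-(1/2) * (u x * Real.tanh x))) ^ 2
          = A ^ 2 / 4 * (u x ^ 2 * Real.tanh x ^ 2) := by ring
      rw [he, u_sq]
    have h3 : (fun x : ℝ => ‖(A • base) x‖ ^ 6)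
        = fun x => A ^ 6 * ((Real.cosh x)⁻¹) ^ 3 := by
      funext x
      rw [habs x, mul_pow]
      congr 1
      have he : u x ^ 6 = (u x ^ 2) ^ 3 := by ring
      rw [he, u_sq]
    rw [h2, h3, integral_const_mul, integral_const_mul, sech_tanh_int, sech3_int.2]
    have hA6 : A ^ 6 = (2 + δ) ^ 3 := by
      have : A ^ 6 = (A ^ 2) ^ 3 := by ring
      rw [this, hA2]
    rw [hA2, hA6]
    nlinarith [Real.pi_pos, hδpos, sq_nonneg δ, mul_pos hδpos Real.pi_pos,
      mul_pos (mul_pos hδpos hδpos) Real.pi_pos]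
end
end

section
/- Let Q : ℝ → ℝ be a ground state, i.e. Q is twice continuously differentiable, positive everywhere, Q(x) → 0 and Q′(x) → 0 as |x| → ∞, and Q satisfies −Q″ + Q − (3/16)Q⁵ = 0 on ℝ. There exists ε₀ > 0 such that: for every continuously differentiable f : ℝ → ℂ with f and f′ square integrable, and every γ ∈ ℝ and y ∈ ℝ satisfying ∫_ℝ |f(x) − e^{−iγ}Q(x − y)|² dx + ∫_ℝ |f′(x) − e^{−iγ}Q′(x − y)|² dx ≤ ε₀², the momentum of f satisfies Im ∫_ℝ conj(f)·f′ dx + (1/4)∫_ℝ |f|⁴ dx ≥ (1/8)∫_ℝ Q(x)⁴ dx. -/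
open MeasureTheory ComplexConjugate

noncomputable section

open Set Filter

namespace GS

variable {Q : ℝ → ℝ}

lemma diffQ (hQ : IsGroundState Q) : Differentiable ℝ Q := hQ.smooth.differentiable (by norm_num)

lemma contDiff_derivQ (hQ : IsGroundState Q) : ContDiff ℝ 1 (deriv Q) :=
  ((contDiff_succ_iff_deriv (n := 1)).mp (by exact_mod_cast hQ.smooth)).2.2

lemma diff_derivQ (hQ : IsGroundState Q) : Differentiable ℝ (deriv Q) :=
  (contDiff_derivQ hQ).differentiable one_ne_zero

lemma contQ (hQ : IsGroundState Q) : Continuous Q := (diffQ hQ).continuous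

lemma contQ' (hQ : IsGroundState Q) : Continuous (deriv Q) := (diff_derivQ hQ).continuous

lemma energy (hQ : IsGroundState Q) : ∀ x : ℝ, (deriv Q x) ^ 2 = Q x ^ 2 - Q x ^ 6 / 16 := by
  set E : ℝ → ℝ := fun x => (deriv Q x) ^ 2 - Q x ^ 2 + Q x ^ 6 / 16 with hE
  have hder : ∀ x, HasDerivAt E 0 x := by
    intro x
    have h1 : HasDerivAt Q (deriv Q x) x := (diffQ hQ x).hasDerivAt
    have h2 : HasDerivAt (deriv Q) (deriv (deriv Q) x) x := (diff_derivQ hQ x).hasDerivAt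
    have := (((h2.pow 2).sub (h1.pow 2)).add ((h1.pow 6).div_const 16))
    refine this.congr_deriv ?_
    have he := hQ.eqn x
    have : deriv (deriv Q) x = Q x - 3/16 * Q x ^ 5 := by linarith
    rw [this]; ring
  have hconst : ∀ x, E x = E 0 := fun x =>
    is_const_of_deriv_eq_zero (fun y => (hder y).differentiableAt)
      (fun y => (hder y).deriv) x 0
  have hlim : Filter.Tendsto E (Filter.cocompact ℝ) (nhds 0) := by
    have := ((hQ.decay_deriv.pow 2).sub (hQ.decay.pow 2)).add ((hQ.decay.pow 6).div_const 16)
    simpa using this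
  have hlim' : Filter.Tendsto E (Filter.cocompact ℝ) (nhds (E 0)) := by
    have : E = fun _ => E 0 := funext hconst
    rw [this]; exact tendsto_const_nhds
  have h0 : E 0 = 0 := tendsto_nhds_unique hlim' hlim
  intro x
  have := hconst x
  rw [h0] at this
  simp only [E] at this
  linarith

end GS

open Set Filter

namespace GS
variable {Q : ℝ → ℝ}

lemma Q_le_two (hQ : IsGroundState Q) (x : ℝ) : Q x ≤ 2 := by
  have he := energy hQ x
  have hp := hQ.pos x
  nlinarith [sq_nonneg (deriv Q x), sq_nonneg (Q x ^ 2 - 4), sq_nonneg (Q x + 2), sq_nonneg (Q x - 2)]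

lemma abs_derivQ_le (hQ : IsGroundState Q) (x : ℝ) : |deriv Q x| ≤ Q x := by
  have he := energy hQ x
  have hp := hQ.pos x
  rw [abs_le]
  constructor <;> nlinarith [sq_nonneg (Q x), pow_pos hp 6, sq_nonneg (deriv Q x + Q x), sq_nonneg (deriv Q x - Q x)]

lemma tendsto_atTop' (hQ : IsGroundState Q) : Tendsto Q atTop (nhds 0) :=
  hQ.decay.mono_left (by rw [cocompact_eq_atBot_atTop]; exact le_sup_right)

/-- On a right ray where `Q ≤ 1`, the derivative is negative. -/
lemma deriv_neg_on_ray (hQ : IsGroundState Q) {R : ℝ} (hR : ∀ x, R ≤ x → Q x ≤ 1) :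
    ∀ x, R ≤ x → deriv Q x < 0 := by
  have hne : ∀ x, R ≤ x → deriv Q x ≠ 0 := by
    intro x hx h0
    have he := energy hQ x
    have hp := hQ.pos x
    have h1 := hR x hx
    have h4 : Q x ^ 4 ≤ 1 := pow_le_one₀ (le_of_lt hp) h1
    have h6 : Q x ^ 6 ≤ Q x ^ 2 := by nlinarith [pow_pos hp 2]
    nlinarith [pow_pos hp 2]
  by_contra hcon
  push_neg at hcon
  obtain ⟨x₀, hx₀R, hx₀⟩ := hcon
  have hpos : 0 < deriv Q x₀ := lt_of_le_of_ne hx₀ (Ne.symm (hne x₀ hx₀R))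
  have hall : ∀ x, x₀ ≤ x → 0 < deriv Q x := by
    intro x hx
    by_contra hneg
    push_neg at hneg
    have : (0:ℝ) ∈ Icc (deriv Q x) (deriv Q x₀) := ⟨hneg, le_of_lt hpos⟩
    have hsub := intermediate_value_Icc' hx ((contQ' hQ).continuousOn) this
    obtain ⟨c, hc, hc0⟩ := hsub
    exact hne c (le_trans hx₀R hc.1) hc0
  have hmono : MonotoneOn Q (Ici x₀) := by
    apply monotoneOn_of_deriv_nonneg (convex_Ici x₀) (contQ hQ).continuousOn
      (fun x _ => ((diffQ hQ) x).differentiableWithinAt)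
    · intro x hx
      rw [interior_Ici] at hx
      exact le_of_lt (hall x (le_of_lt hx))
  have hev : ∀ᶠ x in atTop, Q x < Q x₀ := (tendsto_atTop' hQ).eventually_lt_const (hQ.pos x₀)
  obtain ⟨x₁, hx₁⟩ := (hev.and (eventually_ge_atTop x₀)).exists
  exact absurd (hmono self_mem_Ici hx₁.2 hx₁.2) (not_le.mpr hx₁.1)

lemma deriv_le_on_ray (hQ : IsGroundState Q) {R : ℝ} (hR : ∀ x, R ≤ x → Q x ≤ 1) :
    ∀ x, R ≤ x → deriv Q x ≤ -(Q x / 2) := by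
  intro x hx
  have he := energy hQ x
  have hp := hQ.pos x
  have h1 := hR x hx
  have hneg := deriv_neg_on_ray hQ hR x hx
  by_contra hcon
  push_neg at hcon
  have h4 : Q x ^ 4 ≤ 1 := pow_le_one₀ (le_of_lt hp) h1
  have h6 : Q x ^ 6 ≤ Q x ^ 2 := by nlinarith [pow_pos hp 2]
  have ha : -(deriv Q x) < Q x / 2 := by linarith
  have hb : (0:ℝ) ≤ -(deriv Q x) := by linarith
  have h3 : (-(deriv Q x)) ^ 2 < (Q x / 2) ^ 2 := by
    apply pow_lt_pow_left₀ ha hb (by norm_num)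
  have h5 : (-(deriv Q x))^2 = (deriv Q x)^2 := by ring
  nlinarith [pow_pos hp 2]

lemma decay_exp_on_ray (hQ : IsGroundState Q) {R : ℝ} (hR : ∀ x, R ≤ x → Q x ≤ 1) :
    ∀ x, R ≤ x → Q x ≤ (Q R * Real.exp (R / 2)) * Real.exp (-(1/2) * x) := by
  have hg : ∀ x : ℝ, HasDerivAt (fun x => Q x * Real.exp (x / 2))
      (deriv Q x * Real.exp (x / 2) + Q x * (Real.exp (x / 2) * (1/2))) x := by
    intro x
    have h1 : HasDerivAt Q (deriv Q x) x := (diffQ hQ x).hasDerivAt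
    have h2 : HasDerivAt (fun x : ℝ => Real.exp (x / 2)) (Real.exp (x / 2) * (1/2)) x := by
      have := ((hasDerivAt_id x).div_const 2).exp
      simpa using this
    exact h1.mul h2
  have hanti : AntitoneOn (fun x => Q x * Real.exp (x / 2)) (Ici R) := by
    apply antitoneOn_of_deriv_nonpos (convex_Ici R)
    · exact ((contQ hQ).mul (Real.continuous_exp.comp (continuous_id.div_const 2))).continuousOn
    · exact fun x _ => (hg x).differentiableAt.differentiableWithinAt
    · intro x hx
      rw [interior_Ici] at hx
      rw [(hg x).deriv]
      have hd := deriv_le_on_ray hQ hR x (le_of_lt hx)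
      have he := Real.exp_pos (x / 2)
      nlinarith
  intro x hx
  have h := hanti self_mem_Ici hx hx
  have hexp : Real.exp (x / 2) * Real.exp (-(1/2) * x) = 1 := by
    rw [← Real.exp_add]
    have : x / 2 + -(1/2) * x = 0 := by ring
    rw [this, Real.exp_zero]
  have hepos := Real.exp_pos (-(1/2) * x)
  calc Q x = (Q x * Real.exp (x / 2)) * Real.exp (-(1/2) * x) := by
        rw [mul_assoc, hexp, mul_one]
    _ ≤ (Q R * Real.exp (R / 2)) * Real.exp (-(1/2) * x) := by
        apply mul_le_mul_of_nonneg_right h (le_of_lt hepos)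

lemma integrableOn_right (hQ : IsGroundState Q) : ∃ R : ℝ, IntegrableOn Q (Ioi R) := by
  obtain ⟨R, hR⟩ := eventually_atTop.mp ((tendsto_atTop' hQ).eventually_le_const one_pos)
  refine ⟨R, ?_⟩
  apply Integrable.mono' (((exp_neg_integrableOn_Ioi R (by norm_num : (0:ℝ) < 1/2))).const_mul
    (Q R * Real.exp (R / 2)))
  · exact (contQ hQ).aestronglyMeasurable.restrict
  · rw [ae_restrict_iff' measurableSet_Ioi]
    filter_upwards with x hx
    rw [Real.norm_eq_abs, abs_of_pos (hQ.pos x)]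
    exact decay_exp_on_ray hQ hR x (le_of_lt hx)

lemma reflect (hQ : IsGroundState Q) : IsGroundState (fun x => Q (-x)) := by
  have hneg : Tendsto (Neg.neg : ℝ → ℝ) (cocompact ℝ) (cocompact ℝ) := by
    rw [cocompact_eq_atBot_atTop, Filter.tendsto_sup]
    exact ⟨tendsto_neg_atBot_atTop.mono_right le_sup_right,
      tendsto_neg_atTop_atBot.mono_right le_sup_left⟩
  have hd1 : deriv (fun x => Q (-x)) = fun x => -deriv Q (-x) := funext (deriv_comp_neg Q)
  constructor
  · exact hQ.smooth.comp (contDiff_id.neg)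
  · exact fun x => hQ.pos (-x)
  · exact hQ.decay.comp hneg
  · rw [hd1]
    have := (hQ.decay_deriv.comp hneg).neg
    simpa using this
  · intro x
    have hd2 : deriv (deriv (fun x => Q (-x))) x = deriv (deriv Q) (-x) := by
      rw [hd1, deriv.fun_neg, deriv_comp_neg (deriv Q) x, neg_neg]
    rw [hd2]
    have := hQ.eqn (-x)
    simpa using this

lemma integrable (hQ : IsGroundState Q) : Integrable Q := by
  obtain ⟨R, hR⟩ := integrableOn_right hQ
  obtain ⟨R', hR'⟩ := integrableOn_right (reflect hQ)
  have hleft : IntegrableOn Q (Iio (-R')) := by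
    have hmap : (volume.restrict (Ioi R')).map Neg.neg = volume.restrict (Iio (-R')) := by
      conv => rhs; rw [← Measure.map_neg_eq_self (volume : Measure ℝ),
        measurableEmbedding_neg.restrict_map]
      have hset : (Neg.neg ⁻¹' Iio (-R') : Set ℝ) = Ioi R' := by
        ext x
        simp only [mem_preimage, mem_Ioi, mem_Iio]
        constructor <;> intro h <;> linarith
      rw [hset]
    rw [IntegrableOn, ← hmap, measurableEmbedding_neg.integrable_map_iff]
    exact hR'
  have hmid : IntegrableOn Q (Icc (-R') R) := (contQ hQ).integrableOn_Icc
  have : IntegrableOn Q (Iio (-R') ∪ (Icc (-R') R ∪ Ioi R)) :=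
    hleft.union (hmid.union hR)
  rw [← integrableOn_univ]
  apply this.mono_set
  intro x _
  rcases lt_or_ge x (-R') with h | h
  · exact Or.inl h
  rcases le_or_gt x R with h2 | h2
  · exact Or.inr (Or.inl ⟨h, h2⟩)
  · exact Or.inr (Or.inr h2)

end GS

namespace GS2
open GS

lemma integrable_pow {Q : ℝ → ℝ} (hQ : IsGroundState Q) (n : ℕ) :
    Integrable (fun x => Q x ^ (n + 1)) := by
  apply Integrable.mono' ((GS.integrable hQ).const_mul (2 ^ n))
  · exact ((contQ hQ).pow (n+1)).aestronglyMeasurable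
  · filter_upwards with x
    have hp := hQ.pos x
    rw [Real.norm_eq_abs, abs_of_pos (pow_pos hp (n+1)), pow_succ]
    exact mul_le_mul_of_nonneg_right (pow_le_pow_left₀ (le_of_lt hp) (Q_le_two hQ x) n)
      (le_of_lt hp)

/-- Sup bound: for C¹ complex functions with `|φ|²`, `|φ'|²` integrable,
`|φ x|² ≤ ∫|φ|² + ∫|φ'|²`. -/
lemma sup_bound {φ φ' : ℝ → ℂ} (hd : ∀ x, HasDerivAt φ (φ' x) x) (hc : Continuous φ')
    (h1 : Integrable (fun x => ‖φ x‖ ^ 2))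
    (h2 : Integrable (fun x => ‖φ' x‖ ^ 2)) (x : ℝ) :
    ‖φ x‖ ^ 2 ≤ (∫ t, ‖φ t‖ ^ 2) + ∫ t, ‖φ' t‖ ^ 2 := by
  have hφc : Continuous φ := by
    have : Differentiable ℝ φ := fun t => (hd t).differentiableAt
    exact this.continuous
  set h : ℝ → ℝ := fun t => ‖φ t‖ ^ 2 with hh_def
  set D : ℝ → ℝ := fun t => 2 * (φ t).re * (φ' t).re + 2 * (φ t).im * (φ' t).im with hD_def
  have hre : ∀ t, HasDerivAt (fun s => (φ s).re) ((φ' t).re) t := fun t =>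
    (Complex.reCLM.hasFDerivAt.comp_hasDerivAt t (hd t))
  have him : ∀ t, HasDerivAt (fun s => (φ s).im) ((φ' t).im) t := fun t =>
    (Complex.imCLM.hasFDerivAt.comp_hasDerivAt t (hd t))
  have hhd : ∀ t, HasDerivAt h (D t) t := by
    intro t
    have := ((hre t).pow 2).add ((him t).pow 2)
    have heq : h = fun s => (φ s).re ^ 2 + (φ s).im ^ 2 := by
      funext s
      simp [hh_def, Complex.sq_norm, Complex.normSq_apply]; ring
    rw [heq]
    refine this.congr_deriv ?_
    simp only [hD_def]
    push_cast
    ring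
  have habs_le : ∀ t, |D t| ≤ ‖φ t‖ ^ 2 + ‖φ' t‖ ^ 2 := by
    intro t
    have ha : (φ t).re ^ 2 + (φ t).im ^ 2 = ‖φ t‖ ^ 2 := by
      rw [Complex.sq_norm, Complex.normSq_apply]; ring
    have hb : (φ' t).re ^ 2 + (φ' t).im ^ 2 = ‖φ' t‖ ^ 2 := by
      rw [Complex.sq_norm, Complex.normSq_apply]; ring
    rw [abs_le]
    simp only [hD_def]
    constructor <;> nlinarith [sq_nonneg ((φ t).re - (φ' t).re), sq_nonneg ((φ t).im - (φ' t).im),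
      sq_nonneg ((φ t).re + (φ' t).re), sq_nonneg ((φ t).im + (φ' t).im)]
  have hDcont : Continuous D := by
    apply Continuous.add
    · exact ((continuous_const.mul (Complex.continuous_re.comp hφc)).mul
        (Complex.continuous_re.comp hc))
    · exact ((continuous_const.mul (Complex.continuous_im.comp hφc)).mul
        (Complex.continuous_im.comp hc))
  have hDint : Integrable D := by
    apply Integrable.mono' (h1.add h2) hDcont.aestronglyMeasurable
    filter_upwards with t
    rw [Real.norm_eq_abs]
    exact habs_le t
  have habsDint : Integrable (fun t => |D t|) := hDint.abs
  have key : ∀ a, a ≤ x → h x ≤ h a + ∫ t, |D t| := by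
    intro a ha
    have hftc : ∫ t in a..x, D t = h x - h a :=
      intervalIntegral.integral_eq_sub_of_hasDerivAt (fun t _ => hhd t)
        (hDcont.intervalIntegrable a x)
    have hb1 : |∫ t in a..x, D t| ≤ ∫ t in a..x, |D t| :=
      intervalIntegral.abs_integral_le_integral_abs ha
    have hb2 : ∫ t in a..x, |D t| ≤ ∫ t, |D t| := by
      rw [intervalIntegral.integral_of_le ha]
      apply setIntegral_le_integral habsDint
      filter_upwards with t using abs_nonneg _
    have := hftc ▸ (le_trans (le_abs_self _) (le_trans hb1 hb2))
    linarith
  have hsmall : ∀ δ : ℝ, 0 < δ → ∃ a, a ≤ x ∧ h a ≤ δ := by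
    intro δ hδ
    by_contra hcon
    push_neg at hcon
    have hconst : IntegrableOn (fun _ : ℝ => δ) (Iic x) := by
      apply Integrable.mono' (h1.restrict (s := Iic x)) aestronglyMeasurable_const
      rw [ae_restrict_iff' measurableSet_Iic]
      filter_upwards with t ht
      rw [Real.norm_eq_abs, abs_of_pos hδ]
      exact le_of_lt (hcon t ht)
    rw [integrableOn_const_iff] at hconst
    rcases hconst with h' | h'
    · simp at h'; linarith
    · rw [Real.volume_Iic] at h'
      exact absurd h' (by simp)
  have hx2 : h x ≤ ∫ t, |D t| := by
    by_contra hgt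
    push_neg at hgt
    obtain ⟨a, ha, hsa⟩ := hsmall ((h x - ∫ t, |D t|) / 2) (by linarith)
    have := key a ha
    linarith
  calc h x ≤ ∫ t, |D t| := hx2
    _ ≤ ∫ t, (‖φ t‖ ^ 2 + ‖φ' t‖ ^ 2) :=
        integral_mono habsDint (h1.add h2) habs_le
    _ = (∫ t, ‖φ t‖ ^ 2) + ∫ t, ‖φ' t‖ ^ 2 := integral_add h1 h2

end GS2

namespace Aux
open MeasureTheory

lemma prod_bound {a u : ℝ → ℝ} {ε A : ℝ} (hε : 0 < ε)
    (ha : ∀ x, 0 ≤ a x) (hu : ∀ x, 0 ≤ u x)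
    (hm : AEStronglyMeasurable (fun x => a x * u x) volume)
    (ha2 : Integrable (fun x => a x ^ 2))
    (hu2 : Integrable (fun x => u x ^ 2))
    (hA : (∫ x, a x ^ 2) = A) (hu2le : (∫ x, u x ^ 2) ≤ ε ^ 2) :
    Integrable (fun x => a x * u x) ∧ (∫ x, a x * u x) ≤ (ε * A + ε) / 2 := by
  have hbd_int : Integrable (fun x => (ε * a x ^ 2 + u x ^ 2 / ε) / 2) :=
    ((ha2.const_mul ε).add (hu2.div_const ε)).div_const 2
  have hpt : ∀ x, a x * u x ≤ (ε * a x ^ 2 + u x ^ 2 / ε) / 2 := by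
    intro x
    rw [le_div_iff₀ (by norm_num : (0:ℝ) < 2), ← sub_nonneg]
    have hkey : (ε * a x ^ 2 + u x ^ 2 / ε) - a x * u x * 2 = (ε * a x - u x) ^ 2 / ε := by
      field_simp
      ring
    rw [hkey]
    positivity
  have hint : Integrable (fun x => a x * u x) := by
    apply Integrable.mono' hbd_int hm
    filter_upwards with x
    rw [Real.norm_eq_abs, abs_of_nonneg (mul_nonneg (ha x) (hu x))]
    exact hpt x
  refine ⟨hint, ?_⟩
  calc (∫ x, a x * u x) ≤ ∫ x, (ε * a x ^ 2 + u x ^ 2 / ε) / 2 :=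
        integral_mono hint hbd_int hpt
    _ = (ε * (∫ x, a x ^ 2) + (∫ x, u x ^ 2) / ε) / 2 := by
        rw [integral_div, integral_add (ha2.const_mul ε) (hu2.div_const ε),
          integral_const_mul, integral_div]
    _ ≤ (ε * A + ε) / 2 := by
        rw [hA]
        have : (∫ x, u x ^ 2) / ε ≤ ε := by
          rw [div_le_iff₀ hε]
          nlinarith
        linarith

lemma quartic_pt {a m af : ℝ} (ha : 0 ≤ a) (hm : 0 ≤ m) (haf : 0 ≤ af)
    (h2 : a ≤ af + m) (ha2 : a ≤ 2) :
    a ^ 4 ≤ af ^ 4 + 13 * (2 * (a * m) + m ^ 2) := by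
  rcases le_or_gt a af with h | h
  · have h4 : a ^ 4 ≤ af ^ 4 := pow_le_pow_left₀ ha h 4
    nlinarith [mul_nonneg ha hm, sq_nonneg m]
  · have hd : a - af ≤ m := by linarith
    have hdpos : 0 ≤ a - af := by linarith
    have hafa : af ≤ a := le_of_lt h
    have hsq : a ^ 2 ≤ 4 := by nlinarith
    have hS0 : 0 ≤ a ^ 3 + a ^ 2 * af + a * af ^ 2 + af ^ 3 := by positivity
    have hS : a ^ 3 + a ^ 2 * af + a * af ^ 2 + af ^ 3 ≤ 16 * a := by
      nlinarith [mul_nonneg ha haf, sq_nonneg af, mul_nonneg (mul_nonneg ha ha) haf,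
        mul_nonneg (mul_nonneg ha haf) haf, mul_nonneg (mul_nonneg haf haf) haf,
        pow_le_pow_left₀ haf hafa 2, pow_le_pow_left₀ haf hafa 3]
    have hfac : a ^ 4 - af ^ 4 = (a - af) * (a ^ 3 + a ^ 2 * af + a * af ^ 2 + af ^ 3) := by
      ring
    have hmul : (a - af) * (a ^ 3 + a ^ 2 * af + a * af ^ 2 + af ^ 3) ≤ m * (16 * a) :=
      mul_le_mul hd hS hS0 hm
    nlinarith [mul_nonneg ha hm, sq_nonneg m]

end Aux

open GS GS2 Aux

set_option maxHeartbeats 2000000 in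
/-- Functions `H¹`-close to the orbit of the ground state have momentum
at least `(1/8)∫Q⁴`. -/
theorem momentum_lower_bound_near_groundState (Q : ℝ → ℝ) (hQ : IsGroundState Q) :
    ∃ ε₀ : ℝ, 0 < ε₀ ∧
      ∀ f : ℝ → ℂ, ContDiff ℝ 1 f →
        Integrable (fun x : ℝ => ‖f x‖ ^ 2) →
        Integrable (fun x : ℝ => ‖deriv f x‖ ^ 2) →
        ∀ γ y : ℝ,
          (∫ x : ℝ, ‖f x - Complex.exp (-Complex.I * (γ : ℂ)) * (Q (x - y) : ℂ)‖ ^ 2)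
            + (∫ x : ℝ, ‖deriv f x
                - Complex.exp (-Complex.I * (γ : ℂ)) * (Complex.ofReal (deriv Q (x - y)))‖ ^ 2)
            ≤ ε₀ ^ 2 →
          (1/8) * (∫ x : ℝ, Q x ^ 4)
            ≤ (∫ x : ℝ, conj (f x) * deriv f x).im
              + (1/4) * ∫ x : ℝ, ‖f x‖ ^ 4 := by
  have hQ2int : Integrable (fun x => Q x ^ 2) := by simpa using integrable_pow hQ 1
  have hQ4int : Integrable (fun x => Q x ^ 4) := by simpa using integrable_pow hQ 3
  obtain ⟨A, hA_def⟩ : ∃ a : ℝ, (∫ x, Q x ^ 2) = a := ⟨_, rfl⟩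
  obtain ⟨B, hB_def⟩ : ∃ b : ℝ, (∫ x, Q x ^ 4) = b := ⟨_, rfl⟩
  rw [hB_def]
  have hA_nonneg : 0 ≤ A := hA_def ▸ integral_nonneg (fun x => sq_nonneg _)
  have hB_pos : 0 < B := by
    rw [← hB_def, integral_pos_iff_support_of_nonneg_ae
      (Filter.Eventually.of_forall (fun x => by positivity)) hQ4int]
    have hsupp : Function.support (fun x => Q x ^ 4) = Set.univ := by
      ext x
      simp only [Function.mem_support, Set.mem_univ, iff_true]
      exact ne_of_gt (pow_pos (hQ.pos x) 4)
    rw [hsupp]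
    simp
  obtain ⟨K, hK_def⟩ : ∃ k : ℝ, 10 * (A + 2) = k := ⟨_, rfl⟩
  have hK_pos : 0 < K := by rw [← hK_def]; linarith
  obtain ⟨ε₀, hε₀_def⟩ : ∃ e : ℝ, min 1 (B / (8 * K)) = e := ⟨_, rfl⟩
  refine ⟨ε₀, by rw [← hε₀_def]; exact lt_min one_pos (by positivity), ?_⟩
  have hε₀_pos : 0 < ε₀ := by rw [← hε₀_def]; exact lt_min one_pos (by positivity)
  have hε₀_le1 : ε₀ ≤ 1 := by rw [← hε₀_def]; exact min_le_left _ _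
  have hε₀_sq : ε₀ ^ 2 ≤ ε₀ := by nlinarith
  have hε₀_leB : K * ε₀ ≤ B / 8 := by
    have h : ε₀ ≤ B / (8 * K) := by rw [← hε₀_def]; exact min_le_right _ _
    calc K * ε₀ ≤ K * (B / (8 * K)) := mul_le_mul_of_nonneg_left h (le_of_lt hK_pos)
      _ = B / 8 := by field_simp
  intro f hf hfI hf'I γ y hclose
  set c : ℂ := Complex.exp (-Complex.I * (γ : ℂ)) with hc_def
  have hc_abs : ‖c‖ = 1 := by
    rw [hc_def, Complex.norm_exp]
    simp
  have hcc : (starRingEnd ℂ) c * c = 1 := by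
    rw [mul_comm, Complex.mul_conj, Complex.normSq_eq_norm_sq, hc_abs]
    norm_num
  set w : ℝ → ℂ := fun x => f x - c * ((Q (x - y) : ℝ) : ℂ) with hw_def
  set W : ℝ → ℂ := fun x => deriv f x - c * ((deriv Q (x - y) : ℝ) : ℂ) with hW_def
  -- continuity / differentiability
  have hfd : Differentiable ℝ f := hf.differentiable one_ne_zero
  have hf'c : Continuous (deriv f) :=
    (((contDiff_succ_iff_deriv (n := 0)).mp (by exact_mod_cast hf)).2.2).continuous
  have hQyc : Continuous (fun x => Q (x - y)) := (contQ hQ).comp (continuous_id.sub continuous_const)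
  have hQ'yc : Continuous (fun x => deriv Q (x - y)) :=
    (contQ' hQ).comp (continuous_id.sub continuous_const)
  have hwc : Continuous w :=
    hfd.continuous.sub (continuous_const.mul (Complex.continuous_ofReal.comp hQyc))
  have hWc : Continuous W :=
    hf'c.sub (continuous_const.mul (Complex.continuous_ofReal.comp hQ'yc))
  have hQyR : ∀ x : ℝ, HasDerivAt (fun s => Q (s - y)) (deriv Q (x - y)) x := by
    intro x
    exact HasDerivAt.comp_sub_const x y (GS.diffQ hQ (x - y)).hasDerivAt
  have hQyC : ∀ x : ℝ, HasDerivAt (fun s => ((Q (s - y) : ℝ) : ℂ)) ((deriv Q (x - y) : ℝ) : ℂ) x :=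
    fun x => Complex.ofRealCLM.hasFDerivAt.comp_hasDerivAt x (hQyR x)
  have hwd : ∀ x : ℝ, HasDerivAt w (W x) x :=
    fun x => ((hfd x).hasDerivAt).sub ((hQyC x).const_mul c)
  -- basic pointwise bounds
  have hcabs : ∀ r : ℝ, ‖c * (r : ℂ)‖ = |r| := by
    intro r
    rw [norm_mul, hc_abs, one_mul, Complex.norm_real, Real.norm_eq_abs]
  have habsw : ∀ x, ‖w x‖ ≤ ‖f x‖ + Q (x - y) := by
    intro x
    have h := norm_sub_le (f x) (c * ((Q (x - y) : ℝ) : ℂ))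
    rw [hcabs, abs_of_pos (hQ.pos _)] at h
    exact h
  have habsW : ∀ x, ‖W x‖ ≤ ‖deriv f x‖ + Q (x - y) := by
    intro x
    have h := norm_sub_le (deriv f x) (c * ((deriv Q (x - y) : ℝ) : ℂ))
    rw [hcabs] at h
    exact le_trans h (by linarith [abs_derivQ_le hQ (x - y)])
  -- integrability of translates
  have hQy2 : Integrable (fun x => Q (x - y) ^ 2) := hQ2int.comp_sub_right y
  have hQy4 : Integrable (fun x => Q (x - y) ^ 4) := hQ4int.comp_sub_right y
  have hA_y : (∫ x, Q (x - y) ^ 2) = A := by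
    rw [← hA_def]; exact integral_sub_right_eq_self (fun x => Q x ^ 2) y
  have hB_y : (∫ x, Q (x - y) ^ 4) = B := by
    rw [← hB_def]; exact integral_sub_right_eq_self (fun x => Q x ^ 4) y
  have hw2int : Integrable (fun x => ‖w x‖ ^ 2) := by
    apply Integrable.mono' ((hfI.add hQy2).const_mul 2)
    · exact ((continuous_norm.comp hwc).pow 2).aestronglyMeasurable
    · filter_upwards with x
      rw [Real.norm_eq_abs, abs_of_nonneg (by positivity)]
      simp only [Pi.add_apply]
      have h2 : ‖w x‖ ^ 2 ≤ (‖f x‖ + Q (x - y)) ^ 2 :=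
        pow_le_pow_left₀ (norm_nonneg _) (habsw x) 2
      nlinarith [h2, sq_nonneg (‖f x‖ - Q (x - y))]
  have hW2int : Integrable (fun x => ‖W x‖ ^ 2) := by
    apply Integrable.mono' ((hf'I.add hQy2).const_mul 2)
    · exact ((continuous_norm.comp hWc).pow 2).aestronglyMeasurable
    · filter_upwards with x
      rw [Real.norm_eq_abs, abs_of_nonneg (by positivity)]
      simp only [Pi.add_apply]
      have h2 : ‖W x‖ ^ 2 ≤ (‖deriv f x‖ + Q (x - y)) ^ 2 :=
        pow_le_pow_left₀ (norm_nonneg _) (habsW x) 2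
      nlinarith [h2, sq_nonneg (‖deriv f x‖ - Q (x - y))]
  -- the closeness hypothesis
  have hεsum : (∫ x, ‖w x‖ ^ 2) + (∫ x, ‖W x‖ ^ 2) ≤ ε₀ ^ 2 := hclose
  have hw2nn : 0 ≤ ∫ x, ‖w x‖ ^ 2 := integral_nonneg (fun x => sq_nonneg _)
  have hW2nn : 0 ≤ ∫ x, ‖W x‖ ^ 2 := integral_nonneg (fun x => sq_nonneg _)
  have hεw : (∫ x, ‖w x‖ ^ 2) ≤ ε₀ ^ 2 := by linarith
  have hεW : (∫ x, ‖W x‖ ^ 2) ≤ ε₀ ^ 2 := by linarith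
  -- sup bound for w
  have hsup : ∀ x, ‖w x‖ ≤ ε₀ := by
    intro x
    have h := GS2.sup_bound hwd hWc hw2int hW2int x
    nlinarith [norm_nonneg (w x)]
  -- product bounds
  have hpw := Aux.prod_bound (a := fun x => Q (x - y)) (u := fun x => ‖w x‖)
    hε₀_pos (fun x => (hQ.pos _).le) (fun x => norm_nonneg _)
    (hQyc.mul (continuous_norm.comp hwc)).aestronglyMeasurable hQy2 hw2int hA_y hεw
  have hpW := Aux.prod_bound (a := fun x => Q (x - y)) (u := fun x => ‖W x‖)
    hε₀_pos (fun x => (hQ.pos _).le) (fun x => norm_nonneg _)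
    (hQyc.mul (continuous_norm.comp hWc)).aestronglyMeasurable hQy2 hW2int hA_y hεW
  -- decompose the momentum integrand
  have hfx_eq : ∀ x, f x = c * ((Q (x - y) : ℝ) : ℂ) + w x := by
    intro x; simp only [hw_def]; ring
  have hdx_eq : ∀ x, deriv f x = c * ((deriv Q (x - y) : ℝ) : ℂ) + W x := by
    intro x; simp only [hW_def]; ring
  set T1 : ℝ → ℂ := fun x => ((Q (x - y) * deriv Q (x - y) : ℝ) : ℂ) with hT1_def
  set T2 : ℝ → ℂ := fun x => (starRingEnd ℂ) c * (((Q (x - y) : ℝ) : ℂ) * W x) with hT2_def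
  set T3 : ℝ → ℂ := fun x => c * ((deriv Q (x - y) : ℝ) : ℂ) * (starRingEnd ℂ) (w x) with hT3_def
  set T4 : ℝ → ℂ := fun x => (starRingEnd ℂ) (w x) * W x with hT4_def
  have hpt_split : ∀ x, conj (f x) * deriv f x = T1 x + (T2 x + (T3 x + T4 x)) := by
    intro x
    rw [hfx_eq x, hdx_eq x]
    simp only [hT1_def, hT2_def, hT3_def, hT4_def, map_add, map_mul, Complex.conj_ofReal,
      Complex.ofReal_mul]
    linear_combination (((Q (x - y) : ℝ) : ℂ) * ((deriv Q (x - y) : ℝ) : ℂ)) * hcc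
  -- integrability of the pieces
  have hQQ'int : Integrable (fun x => Q (x - y) * deriv Q (x - y)) := by
    apply Integrable.mono' hQy2 (hQyc.mul hQ'yc).aestronglyMeasurable
    filter_upwards with x
    simp only [Pi.mul_apply]
    rw [Real.norm_eq_abs, abs_mul, abs_of_pos (hQ.pos _), sq]
    exact mul_le_mul_of_nonneg_left (abs_derivQ_le hQ (x - y)) (hQ.pos _).le
  have hT1int : Integrable T1 := hQQ'int.ofReal
  have hT2norm : ∀ x, ‖T2 x‖ = Q (x - y) * ‖W x‖ := by
    intro x
    simp only [hT2_def, norm_mul, Complex.norm_conj, hc_abs,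
      Complex.norm_real, Real.norm_eq_abs, one_mul, abs_of_pos (hQ.pos (x - y))]
  have hT3norm : ∀ x, ‖T3 x‖ ≤ Q (x - y) * ‖w x‖ := by
    intro x
    simp only [hT3_def, norm_mul, Complex.norm_conj, hc_abs,
      Complex.norm_real, Real.norm_eq_abs, one_mul]
    exact mul_le_mul_of_nonneg_right (abs_derivQ_le hQ (x - y)) (norm_nonneg _)
  have hT4norm : ∀ x, ‖T4 x‖ ≤ (‖w x‖ ^ 2 + ‖W x‖ ^ 2) / 2 := by
    intro x
    simp only [hT4_def, norm_mul, Complex.norm_conj]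
    nlinarith [sq_nonneg (‖w x‖ - ‖W x‖)]
  have hT2c : Continuous T2 := continuous_const.mul
    ((Complex.continuous_ofReal.comp hQyc).mul hWc)
  have hT3c : Continuous T3 := (continuous_const.mul (Complex.continuous_ofReal.comp hQ'yc)).mul
    (Complex.continuous_conj.comp hwc)
  have hT4c : Continuous T4 := (Complex.continuous_conj.comp hwc).mul hWc
  have hT2int : Integrable T2 := by
    apply Integrable.mono' hpW.1 hT2c.aestronglyMeasurable
    filter_upwards with x using le_of_eq (hT2norm x)
  have hT3int : Integrable T3 := by
    apply Integrable.mono' hpw.1 hT3c.aestronglyMeasurable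
    filter_upwards with x using hT3norm x
  have hg4int : Integrable (fun x => (‖w x‖ ^ 2 + ‖W x‖ ^ 2) / 2) :=
    (hw2int.add hW2int).div_const 2
  have hT4int : Integrable T4 := by
    apply Integrable.mono' hg4int hT4c.aestronglyMeasurable
    filter_upwards with x using hT4norm x
  -- split the momentum integral
  have h34 : Integrable (fun x => T3 x + T4 x) := hT3int.add hT4int
  have h234 : Integrable (fun x => T2 x + (T3 x + T4 x)) := hT2int.add h34
  have hsplit : (∫ x, conj (f x) * deriv f x) =
      (∫ x, T1 x) + ((∫ x, T2 x) + ((∫ x, T3 x) + ∫ x, T4 x)) := by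
    have h0 : (∫ x, conj (f x) * deriv f x) = ∫ x, (T1 x + (T2 x + (T3 x + T4 x))) := by
      congr 1
      funext x
      exact hpt_split x
    rw [h0, integral_add hT1int h234, integral_add hT2int h34, integral_add hT3int hT4int]
  -- imaginary part estimates
  have him1 : (∫ x, T1 x).im = 0 := by
    have h0 : (∫ x, T1 x) = ((∫ x, Q (x - y) * deriv Q (x - y) : ℝ) : ℂ) := integral_ofReal
    rw [h0]
    exact Complex.ofReal_im _
  have him_ge : ∀ (T : ℝ → ℂ) (g : ℝ → ℝ), Integrable g → (∀ x, ‖T x‖ ≤ g x) →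
      -(∫ x, g x) ≤ (∫ x, T x).im := by
    intro T g hg hle
    have h1 : ‖∫ x, T x‖ ≤ ∫ x, g x := norm_integral_le_of_norm_le hg (ae_of_all _ hle)
    have h2 : |(∫ x, T x).im| ≤ ‖∫ x, T x‖ := Complex.abs_im_le_norm _
    have := abs_le.mp (le_trans h2 h1)
    linarith [this.1]
  have him2 : -((ε₀ * A + ε₀) / 2) ≤ (∫ x, T2 x).im := by
    have h := him_ge T2 (fun x => Q (x - y) * ‖W x‖) hpW.1
      (fun x => le_of_eq (hT2norm x))
    linarith [hpW.2]
  have him3 : -((ε₀ * A + ε₀) / 2) ≤ (∫ x, T3 x).im := by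
    have h := him_ge T3 (fun x => Q (x - y) * ‖w x‖) hpw.1 hT3norm
    linarith [hpw.2]
  have him4 : -(ε₀ / 2) ≤ (∫ x, T4 x).im := by
    have h := him_ge T4 _ hg4int hT4norm
    have hval : (∫ x, (‖w x‖ ^ 2 + ‖W x‖ ^ 2) / 2)
        = ((∫ x, ‖w x‖ ^ 2) + ∫ x, ‖W x‖ ^ 2) / 2 := by
      rw [integral_div, integral_add hw2int hW2int]
    rw [hval] at h
    linarith [hε₀_sq]
  have hIm_total : -(ε₀ * (A + 1) + ε₀ / 2) ≤ (∫ x, conj (f x) * deriv f x).im := by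
    rw [hsplit]
    simp only [Complex.add_im, him1, zero_add]
    linarith
  -- quartic estimate
  have habsf : ∀ x, ‖f x‖ ≤ Q (x - y) + ‖w x‖ := by
    intro x
    rw [hfx_eq x]
    have h := norm_add_le (c * ((Q (x - y) : ℝ) : ℂ)) (w x)
    rw [hcabs, abs_of_pos (hQ.pos _)] at h
    exact h
  have hQlef : ∀ x, Q (x - y) ≤ ‖f x‖ + ‖w x‖ := by
    intro x
    have heq : c * ((Q (x - y) : ℝ) : ℂ) = f x - w x := by
      simp only [hw_def]; ring
    have h := norm_sub_le (f x) (w x)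
    rw [← heq] at h
    rw [hcabs, abs_of_pos (hQ.pos _)] at h
    exact h
  have hf4int : Integrable (fun x => ‖f x‖ ^ 4) := by
    apply Integrable.mono' (hfI.const_mul 9)
    · exact ((continuous_norm.comp hfd.continuous).pow 4).aestronglyMeasurable
    · filter_upwards with x
      rw [Real.norm_eq_abs, abs_of_nonneg (by positivity)]
      have h1 : ‖f x‖ ≤ 3 := by
        have := habsf x
        have := hsup x
        have := Q_le_two hQ (x - y)
        linarith
      have h0 := norm_nonneg (f x)
      have h2 : ‖f x‖ ^ 2 ≤ 9 := by
        calc ‖f x‖ ^ 2 ≤ 3 ^ 2 := pow_le_pow_left₀ h0 h1 2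
          _ = 9 := by norm_num
      calc ‖f x‖ ^ 4 = ‖f x‖ ^ 2 * ‖f x‖ ^ 2 := by ring
        _ ≤ 9 * ‖f x‖ ^ 2 := mul_le_mul_of_nonneg_right h2 (sq_nonneg _)
  have hqw_int : Integrable (fun x => Q (x - y) * ‖w x‖) := hpw.1
  have hqw2_int : Integrable (fun x => 2 * (Q (x - y) * ‖w x‖)) :=
    hqw_int.const_mul 2
  have hbig_int : Integrable
      (fun x => 2 * (Q (x - y) * ‖w x‖) + ‖w x‖ ^ 2) :=
    hqw2_int.add hw2int
  have h13_int : Integrable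
      (fun x => 13 * (2 * (Q (x - y) * ‖w x‖) + ‖w x‖ ^ 2)) :=
    hbig_int.const_mul 13
  have hlow_int : Integrable (fun x =>
      Q (x - y) ^ 4 - 13 * (2 * (Q (x - y) * ‖w x‖) + ‖w x‖ ^ 2)) :=
    hQy4.sub h13_int
  have hquart : (∫ x, (Q (x - y) ^ 4
        - 13 * (2 * (Q (x - y) * ‖w x‖) + ‖w x‖ ^ 2)))
      ≤ ∫ x, ‖f x‖ ^ 4 := by
    apply integral_mono hlow_int hf4int
    intro x
    have h := Aux.quartic_pt (a := Q (x - y)) (m := ‖w x‖) (af := ‖f x‖)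
      (hQ.pos _).le (norm_nonneg _) (norm_nonneg _)
      (hQlef x) (Q_le_two hQ (x - y))
    simp only
    linarith
  have hlow_val : (∫ x, (Q (x - y) ^ 4
        - 13 * (2 * (Q (x - y) * ‖w x‖) + ‖w x‖ ^ 2)))
      = B - 13 * (2 * (∫ x, Q (x - y) * ‖w x‖) + ∫ x, ‖w x‖ ^ 2) := by
    rw [integral_sub hQy4 h13_int, hB_y, integral_const_mul,
      integral_add hqw2_int hw2int, integral_const_mul]
  have hquart_total : B - 13 * (ε₀ * (A + 1) + ε₀ ^ 2) ≤ ∫ x, ‖f x‖ ^ 4 := by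
    rw [hlow_val] at hquart
    have h1 := hpw.2
    nlinarith
  -- final arithmetic
  have herr : ε₀ * (A + 1) + ε₀ / 2 + (13/4) * (ε₀ * (A + 1) + ε₀ ^ 2) ≤ K * ε₀ := by
    rw [← hK_def]
    have hAe : 0 ≤ ε₀ * A := mul_nonneg hε₀_pos.le hA_nonneg
    linarith [hε₀_sq, hAe]
  linarith [hIm_total, hquart_total, herr, hε₀_leB]
end
end
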